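/- arXiv:1510.07301 — 6 statements merged into one kernel-verified Lean document; each statement's English description precedes it below -/
import Mathlib

section
/- Let P_N(i,j,q) = Σ_n p_N(i,j,n) q^n where p_N(i,j,n) counts partitions of n into distinct parts ≤ N with i odd-indexed odd parts and j even-indexed odd parts. Then for all non-negative integers N, i, j with ν ∈ {0,1} and N ≥ 1−ν: P_{2N+ν}(i,j,q) = P_{2N+ν−1}(i,j,q) + q^{2N+ν}·χ(i≥ν)·P_{2N+ν−1}(j, i−ν, q), with initial condition P_0(i,j,q) = δ_{i,0}δ_{j,0}. -/
def IsDistinctPartition (π : List ℕ) : Prop :=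
  π.Chain' (· > ·) ∧ ∀ p ∈ π, 0 < p

def IsPartition (π : List ℕ) : Prop :=
  π.Chain' (· ≥ ·) ∧ ∀ p ∈ π, 0 < p

def oddIdxOdd (π : List ℕ) : ℕ :=
  ((π.zipIdx.map Prod.swap).filter fun p => p.1 % 2 == 0 && p.2 % 2 == 1).length

def evenIdxOdd (π : List ℕ) : ℕ :=
  ((π.zipIdx.map Prod.swap).filter fun p => p.1 % 2 == 1 && p.2 % 2 == 1).length

def bgRank (π : List ℕ) : ℤ := (oddIdxOdd π : ℤ) - evenIdxOdd π

def altSum : List ℕ → ℤ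
  | [] => 0
  | a :: t => (a : ℤ) - altSum t

noncomputable def gaussPoly : ℕ → ℕ → Polynomial ℚ
  | _, 0 => 1
  | 0, _ + 1 => 0
  | m + 1, r + 1 => gaussPoly m r + Polynomial.X ^ (r + 1) * gaussPoly m (r + 1)

noncomputable def gaussZ (m : ℕ) (r : ℤ) : Polynomial ℚ :=
  if 0 ≤ r then gaussPoly m r.toNat else 0

noncomputable def P (N i j : ℕ) : PowerSeries ℚ :=
  PowerSeries.mk fun n =>
    (Nat.card {π : List ℕ // IsDistinctPartition π ∧ (∀ p ∈ π, p ≤ N) ∧ π.sum = n ∧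
      oddIdxOdd π = i ∧ evenIdxOdd π = j} : ℚ)

/-! ### Auxiliary lemmas -/

def SP (N i j n : ℕ) : Type :=
  {π : List ℕ // IsDistinctPartition π ∧ (∀ p ∈ π, p ≤ N) ∧ π.sum = n ∧
      oddIdxOdd π = i ∧ evenIdxOdd π = j}

lemma P_eq (N i j : ℕ) : P N i j = PowerSeries.mk fun n => (Nat.card (SP N i j n) : ℚ) := rfl

lemma cnt (l : List ℕ) : ∀ (k : ℕ),
    (((List.zipIdx l (k+1)).map Prod.swap).filter (fun p => p.1 % 2 == 0 && p.2 % 2 == 1)).length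
      = (((List.zipIdx l k).map Prod.swap).filter (fun p => p.1 % 2 == 1 && p.2 % 2 == 1)).length ∧
    (((List.zipIdx l (k+1)).map Prod.swap).filter (fun p => p.1 % 2 == 1 && p.2 % 2 == 1)).length
      = (((List.zipIdx l k).map Prod.swap).filter (fun p => p.1 % 2 == 0 && p.2 % 2 == 1)).length := by
  induction l with
  | nil => simp
  | cons a t ih =>
    intro k
    have h1 : ((k+1) % 2 == 0) = (k % 2 == 1) := by
      rcases Nat.mod_two_eq_zero_or_one k with h|h <;> simp [Nat.add_mod, h]
    have h2 : ((k+1) % 2 == 1) = (k % 2 == 0) := by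
      rcases Nat.mod_two_eq_zero_or_one k with h|h <;> simp [Nat.add_mod, h]
    simp only [List.zipIdx_cons, List.map_cons, Prod.swap_prod_mk, List.filter_cons, h1, h2]
    rcases (ih (k+1)) with ⟨ih1, ih2⟩
    constructor <;> cases hk0 : (k % 2 == 0) <;> cases hk1 : (k % 2 == 1) <;>
      cases ha : (a % 2 == 1) <;> simp_all [Bool.and_eq_true]

lemma oddIdxOdd_cons (a : ℕ) (l : List ℕ) :
    oddIdxOdd (a :: l) = (if a % 2 = 1 then 1 else 0) + evenIdxOdd l := by
  have := (cnt l 0).1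
  simp only [oddIdxOdd, evenIdxOdd, List.zipIdx_cons, List.map_cons, Prod.swap_prod_mk, List.filter_cons]
  by_cases ha : a % 2 = 1 <;> simp [ha, this] <;> omega

lemma evenIdxOdd_cons (a : ℕ) (l : List ℕ) :
    evenIdxOdd (a :: l) = oddIdxOdd l := by
  have := (cnt l 0).2
  simp only [oddIdxOdd, evenIdxOdd, List.zipIdx_cons, List.map_cons, Prod.swap_prod_mk, List.filter_cons]
  simp [this]

lemma chain'_gt_iff (a : ℕ) (l : List ℕ) :
    List.Chain' (· > ·) (a :: l) ↔ List.Chain' (· > ·) l ∧ ∀ p ∈ l, p < a := by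
  unfold List.Chain'
  rw [List.isChain_iff_pairwise, List.pairwise_cons, ← List.isChain_iff_pairwise]
  tauto

lemma length_le_sum (l : List ℕ) (h : ∀ p ∈ l, 0 < p) : l.length ≤ l.sum := by
  induction l with
  | nil => simp
  | cons a t ih =>
    have := h a (by simp)
    have := ih fun p hp => h p (List.mem_cons_of_mem _ hp)
    simp only [List.length_cons, List.sum_cons]; omega

lemma finite_SP (N i j n : ℕ) : Finite (SP N i j n) := by
  have : {π : List ℕ | IsDistinctPartition π ∧ (∀ p ∈ π, p ≤ N) ∧ π.sum = n ∧
      oddIdxOdd π = i ∧ evenIdxOdd π = j}.Finite := by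
    apply Set.Finite.subset (Set.Finite.image (List.map (Fin.val : Fin (n+1) → ℕ))
      (List.finite_length_le (Fin (n+1)) n))
    intro l hl
    obtain ⟨⟨hc, hpos⟩, _, hsum, _⟩ := hl
    have hle : ∀ p ∈ l, p < n + 1 := fun p hp =>
      Nat.lt_succ_of_le (hsum ▸ List.single_le_sum (fun q _ => Nat.zero_le q) p hp)
    refine ⟨l.pmap (fun p hp => (⟨p, hp⟩ : Fin (n+1))) hle, ?_, ?_⟩
    · simpa using hsum ▸ length_le_sum l hpos
    · simp [List.map_pmap]
  exact this.to_subtype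

/-- If `M ∈ π` and `π` is a distinct partition with parts `≤ M`, then `π = M :: π.tail`
with all tail parts `< M`. -/
lemma head_decomp {π : List ℕ} {M : ℕ} (hd : List.Chain' (· > ·) π)
    (hle : ∀ p ∈ π, p ≤ M) (hM : M ∈ π) :
    π = M :: π.tail ∧ ∀ p ∈ π.tail, p < M := by
  cases π with
  | nil => simp at hM
  | cons a t =>
    rw [chain'_gt_iff] at hd
    have ht : ∀ p ∈ t, p < a := hd.2
    have ha : a = M := by
      rcases List.mem_cons.mp hM with h | h
      · exact h.symm
      · exact absurd (hle a (by simp)) (not_le.mpr (ht M h))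
    subst ha
    exact ⟨rfl, ht⟩

lemma card_SP_zero (i j n : ℕ) :
    Nat.card (SP 0 i j n) = if n = 0 ∧ i = 0 ∧ j = 0 then 1 else 0 := by
  have hnil : ∀ x : SP 0 i j n, x.val = [] := by
    rintro ⟨π, ⟨_, hpos⟩, hle, _⟩
    cases π with
    | nil => rfl
    | cons a t => exact absurd (hle a (by simp)) (not_le.mpr (hpos a (by simp)))
  split_ifs with h
  · obtain ⟨rfl, rfl, rfl⟩ := h
    have : Unique (SP 0 0 0 0) := by
      refine ⟨⟨⟨[], ?_⟩⟩, ?_⟩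
      · refine ⟨⟨List.isChain_nil, by simp⟩, by simp, rfl, rfl, rfl⟩
      · intro x
        apply Subtype.ext
        rw [hnil x]; rfl
    exact Nat.card_unique
  · have : IsEmpty (SP 0 i j n) := by
      constructor
      rintro x
      obtain ⟨π, _, _, hsum, hi, hj⟩ := x
      have hπ : π = [] := hnil ⟨π, ‹_›, ‹_›, hsum, hi, hj⟩
      subst hπ
      apply h
      refine ⟨hsum.symm, hi.symm, hj.symm⟩
    simp [Nat.card_of_isEmpty]

/-- The main counting recursion. -/
lemma card_SP_rec (M i j n ν : ℕ) (hM : 1 ≤ M) (hν : M % 2 = ν) :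
    Nat.card (SP M i j n)
      = Nat.card (SP (M-1) i j n)
        + (if ν ≤ i ∧ M ≤ n then Nat.card (SP (M-1) j (i-ν) (n-M)) else 0) := by
  have hν1 : ν ≤ 1 := by omega
  have := finite_SP M i j n
  have := finite_SP (M-1) i j n
  -- equivalence for the "no part equal to M" piece
  have eB : {x : SP M i j n // M ∉ x.val} ≃ SP (M-1) i j n :=
    { toFun := fun x => ⟨x.val.val, x.val.prop.1, fun p hp => by
        have h1 := x.val.prop.2.1 p hp
        have h2 : p ≠ M := fun h => x.prop (h ▸ hp)
        omega, x.val.prop.2.2⟩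
      invFun := fun y => ⟨⟨y.val, y.prop.1, fun p hp => by
        have := y.prop.2.1 p hp; omega, y.prop.2.2⟩, fun hc => by
        have := y.prop.2.1 M hc; omega⟩
      left_inv := fun x => by apply Subtype.ext; apply Subtype.ext; rfl
      right_inv := fun y => by apply Subtype.ext; rfl }
  by_cases hgood : ν ≤ i ∧ M ≤ n
  · obtain ⟨hνi, hMn⟩ := hgood
    have := finite_SP (M-1) j (i-ν) (n-M)
    have eC : {x : SP M i j n // M ∈ x.val} ≃ SP (M-1) j (i-ν) (n-M) :=
      { toFun := fun x => ⟨x.val.val.tail, by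
          obtain ⟨⟨hch, hpos⟩, hle, hsum, hi, hj⟩ := x.val.prop
          obtain ⟨hdec, hlt⟩ := head_decomp hch hle x.prop
          refine ⟨⟨?_, ?_⟩, ?_, ?_, ?_, ?_⟩
          · rw [hdec, chain'_gt_iff] at hch; exact hch.1
          · exact fun p hp => hpos p (by rw [hdec]; exact List.mem_cons_of_mem _ hp)
          · exact fun p hp => by have := hlt p hp; omega
          · rw [hdec] at hsum; simp only [List.sum_cons] at hsum; omega
          · rw [hdec, evenIdxOdd_cons] at hj; exact hj
          · rw [hdec, oddIdxOdd_cons] at hi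
            have : (if M % 2 = 1 then 1 else 0) = ν := by split_ifs with hsp <;> omega
            rw [this] at hi; omega⟩
        invFun := fun y => ⟨⟨M :: y.val, by
          obtain ⟨⟨hch, hpos⟩, hle, hsum, hj', hi'⟩ := y.prop
          refine ⟨⟨?_, ?_⟩, ?_, ?_, ?_, ?_⟩
          · rw [chain'_gt_iff]
            exact ⟨hch, fun p hp => by have := hle p hp; omega⟩
          · intro p hp
            rcases List.mem_cons.mp hp with rfl | hp
            · omega
            · exact hpos p hp
          · intro p hp
            rcases List.mem_cons.mp hp with rfl | hp
            · rfl
            · have := hle p hp; omega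
          · simp only [List.sum_cons]; omega
          · rw [oddIdxOdd_cons, hi']
            have : (if M % 2 = 1 then 1 else 0) = ν := by split_ifs with hsp <;> omega
            rw [this]; omega
          · rw [evenIdxOdd_cons]; exact hj'⟩, by simp⟩
        left_inv := fun x => by
          have h := head_decomp x.val.prop.1.1 x.val.prop.2.1 x.prop
          exact Subtype.ext (Subtype.ext h.1.symm)
        right_inv := fun y => Subtype.ext rfl }
    rw [if_pos ⟨hνi, hMn⟩]
    calc Nat.card (SP M i j n)
        = Nat.card ({x : SP M i j n // M ∉ x.val} ⊕ {x : SP M i j n // M ∈ x.val}) := by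
          refine Nat.card_congr ?_
          exact ((Equiv.sumCompl (fun x : SP M i j n => M ∈ x.val)).symm.trans
            (Equiv.sumComm _ _))
      _ = _ := by
          rw [Nat.card_sum, Nat.card_congr eB, Nat.card_congr eC]
  · rw [if_neg hgood]
    have hnoM : ∀ x : SP M i j n, M ∉ x.val := by
      rintro ⟨π, ⟨hch, hpos⟩, hle, hsum, hi, hj⟩ hMx
      obtain ⟨hdec, hlt⟩ := head_decomp hch hle hMx
      apply hgood
      constructor
      · rw [hdec, oddIdxOdd_cons] at hi
        have : (if M % 2 = 1 then 1 else 0) = ν := by split_ifs with hsp <;> omega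
        omega
      · have : M ≤ π.sum := List.single_le_sum (fun q _ => Nat.zero_le q) M hMx
        omega
    have e : SP M i j n ≃ SP (M-1) i j n :=
      (Equiv.subtypeUnivEquiv hnoM).symm.trans eB
    rw [Nat.card_congr e, Nat.add_zero]

theorem stmt1 :
    (∀ i j : ℕ, P 0 i j = if i = 0 ∧ j = 0 then 1 else 0) ∧
    (∀ N i j ν : ℕ, ν ≤ 1 → 1 - ν ≤ N →
      P (2 * N + ν) i j
        = P (2 * N + ν - 1) i j
          + PowerSeries.X ^ (2 * N + ν) *
            (if ν ≤ i then P (2 * N + ν - 1) j (i - ν) else 0)) := by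
  constructor
  · intro i j
    ext n
    rw [P_eq, PowerSeries.coeff_mk, card_SP_zero]
    split_ifs with h1 h2 <;>
      simp_all [PowerSeries.coeff_one]
  · intro N i j ν hν hN
    set M := 2 * N + ν with hMdef
    have hM1 : 1 ≤ M := by omega
    have hMν : M % 2 = ν := by omega
    ext n
    rw [map_add, P_eq, P_eq, PowerSeries.coeff_mk, PowerSeries.coeff_mk,
      card_SP_rec M i j n ν hM1 hMν, PowerSeries.coeff_X_pow_mul']
    push_cast
    congr 1
    by_cases hνi : ν ≤ i <;> by_cases hMn : M ≤ n <;>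
      simp [hνi, hMn, P_eq, PowerSeries.coeff_mk]
end

section
/- For nonnegative integer N, ν ∈ {0,1}, and any integer k, the generating function for the number of partitions (repetitions allowed) into parts ≤ 2N+ν with BG-rank equal to k is q^{2k²−k} / ((q²;q²)_{N+k} (q²;q²)_{N−k+ν}). -/
namespace Stmt9Aux

lemma bgRank_nil : bgRank [] = 0 := by simp [bgRank, oddIdxOdd, evenIdxOdd]

lemma aux_swap (t : List ℕ) : ∀ n : ℕ,
    ((((t.zipIdx (n+1)).map Prod.swap).filter fun p => p.1 % 2 == 0 && p.2 % 2 == 1).length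
      = (((t.zipIdx n).map Prod.swap).filter fun p => p.1 % 2 == 1 && p.2 % 2 == 1).length)
    ∧ ((((t.zipIdx (n+1)).map Prod.swap).filter fun p => p.1 % 2 == 1 && p.2 % 2 == 1).length
      = (((t.zipIdx n).map Prod.swap).filter fun p => p.1 % 2 == 0 && p.2 % 2 == 1).length) := by
  induction t with
  | nil => intro n; simp
  | cons a t ih =>
    intro n
    obtain ⟨h1, h2⟩ := ih (n+1)
    have e0 : (((n+1) % 2 : ℕ) == 0) = ((n % 2 : ℕ) == 1) := by
      rcases Nat.mod_two_eq_zero_or_one n with h | h <;> simp [Nat.add_mod, h]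
    have e1 : (((n+1) % 2 : ℕ) == 1) = ((n % 2 : ℕ) == 0) := by
      rcases Nat.mod_two_eq_zero_or_one n with h | h <;> simp [Nat.add_mod, h]
    simp only [List.zipIdx_cons, List.map_cons, Prod.swap_prod_mk, List.filter_cons, e0, e1]
    constructor <;> cases hb : ((n % 2 : ℕ) == 1) <;> cases ha : ((a % 2 : ℕ) == 1) <;>
      simp_all <;> omega

lemma oddIdxOdd_cons (a : ℕ) (t : List ℕ) :
    oddIdxOdd (a :: t) = (if a % 2 = 1 then 1 else 0) + evenIdxOdd t := by
  have h := (aux_swap t 0).1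
  simp only [Nat.zero_add] at h
  simp only [oddIdxOdd, evenIdxOdd, List.zipIdx_cons, List.map_cons, Prod.swap_prod_mk, Nat.zero_add, List.filter_cons]
  by_cases ha : a % 2 = 1 <;> simp [ha, h] <;> omega

lemma evenIdxOdd_cons (a : ℕ) (t : List ℕ) :
    evenIdxOdd (a :: t) = oddIdxOdd t := by
  have h := (aux_swap t 0).2
  simp only [Nat.zero_add] at h
  simp only [oddIdxOdd, evenIdxOdd, List.zipIdx_cons, List.map_cons, Prod.swap_prod_mk, Nat.zero_add, List.filter_cons]
  simp [h]

lemma bgRank_cons (a : ℕ) (t : List ℕ) :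
    bgRank (a :: t) = ((a % 2 : ℕ) : ℤ) - bgRank t := by
  simp only [bgRank, oddIdxOdd_cons, evenIdxOdd_cons]
  have : a % 2 = 1 ∨ a % 2 = 0 := by omega
  rcases this with h | h <;> simp [h] <;> push_cast <;> ring

abbrev A (L n : ℕ) (k : ℤ) : Type :=
  {π : List ℕ // IsPartition π ∧ (∀ p ∈ π, p ≤ L) ∧ π.sum = n ∧ bgRank π = k}

instance finA (L n : ℕ) (k : ℤ) : Finite (A L n k) := by
  have hinj : Function.Injective (fun x : A L n k =>
      (⟨((x.1 : List ℕ) : Multiset ℕ), fun {p} hp => x.2.1.2 p hp,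
        by simpa using x.2.2.2.1⟩ : Nat.Partition n)) := by
    intro x y hxy
    have hperm : List.Perm x.1 y.1 := by
      have := congrArg Nat.Partition.parts hxy
      simpa [Multiset.coe_eq_coe] using this
    have hs1 : List.Pairwise (· ≥ ·) x.1 := List.isChain_iff_pairwise.1 x.2.1.1
    have hs2 : List.Pairwise (· ≥ ·) y.1 := List.isChain_iff_pairwise.1 y.2.1.1
    exact Subtype.ext (List.Perm.eq_of_pairwise (fun a b _ _ h1 h2 => le_antisymm h2 h1) hs1 hs2 hperm)
  exact Finite.of_injective _ hinj

lemma cons_of_not_le {L : ℕ} {π : List ℕ} (hp : IsPartition π)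
    (hle : ∀ p ∈ π, p ≤ L + 1) (hne : ¬ ∀ p ∈ π, p ≤ L) :
    π = (L+1) :: π.tail := by
  push_neg at hne
  obtain ⟨p, hpmem, hpL⟩ := hne
  have hp1 : p = L + 1 := le_antisymm (hle p hpmem) (by omega)
  cases π with
  | nil => simp at hpmem
  | cons a t =>
    have hpair : (a :: t).Pairwise (· ≥ ·) := (List.isChain_iff_pairwise).1 hp.1
    have ha : a = L + 1 := by
      rcases List.mem_cons.1 hpmem with h | h
      · omega
      · have h2 : a ≥ p := (List.pairwise_cons.1 hpair).1 p h
        have h3 := hle a (by simp)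
        omega
    simp [ha]

lemma card_rec (L n : ℕ) (k : ℤ) (hn : L + 1 ≤ n) :
    Nat.card (A (L+1) n k) = Nat.card (A L n k) +
      Nat.card (A (L+1) (n - (L+1)) ((((L+1) % 2 : ℕ) : ℤ) - k)) := by
  classical
  rw [← Nat.card_congr (Equiv.sumCompl (fun x : A (L+1) n k => ∀ p ∈ x.1, p ≤ L)),
    Nat.card_sum]
  congr 1
  · apply Nat.card_congr
    refine ⟨fun x => ⟨x.1.1, x.1.2.1, x.2, x.1.2.2.2⟩,
      fun y => ⟨⟨y.1, y.2.1, fun p hp => le_trans (y.2.2.1 p hp) (by omega), y.2.2.2⟩, y.2.2.1⟩,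
      fun x => by ext; rfl, fun y => by ext; rfl⟩
  · apply Nat.card_congr
    have key : ∀ x : {x : A (L+1) n k // ¬ ∀ p ∈ x.1, p ≤ L}, (x.1.1 : List ℕ) = (L+1) :: x.1.1.tail :=
      fun x => cons_of_not_le x.1.2.1 x.1.2.2.1 x.2
    refine ⟨fun x => ⟨x.1.1.tail, ⟨x.1.2.1.1.tail, fun p hp => x.1.2.1.2 p (List.mem_of_mem_tail hp)⟩,
        fun p hp => x.1.2.2.1 p (List.mem_of_mem_tail hp), ?_, ?_⟩,
      fun y => ⟨⟨(L+1) :: y.1, ⟨?_, ?_⟩, ?_, ?_, ?_⟩, ?_⟩, fun x => ?_, fun y => ?_⟩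
    · -- tail sum
      have hx := key x
      have hsum := x.1.2.2.2.1
      rw [hx, List.sum_cons] at hsum
      omega
    · -- tail bgRank
      have hx := key x
      have hbg := x.1.2.2.2.2
      rw [hx, bgRank_cons] at hbg
      omega
    · -- chain' cons
      refine List.isChain_cons.2 ⟨fun b hb => ?_, y.2.1.1⟩
      exact y.2.2.1 b (List.mem_of_mem_head? hb)
    · intro p hp
      rcases List.mem_cons.1 hp with h | h
      · omega
      · exact y.2.1.2 p h
    · intro p hp
      rcases List.mem_cons.1 hp with h | h
      · omega
      · exact y.2.2.1 p h
    · simp only [List.sum_cons, y.2.2.2.1]; omega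
    · rw [bgRank_cons, y.2.2.2.2]; ring
    · simp only [not_forall]
      exact ⟨L+1, by simp, by omega⟩
    · ext1; ext1
      exact (key x).symm
    · rfl

lemma card_eq_of_lt (L n : ℕ) (k : ℤ) (hn : n < L + 1) :
    Nat.card (A (L+1) n k) = Nat.card (A L n k) := by
  apply Nat.card_congr
  apply Equiv.subtypeEquivRight
  intro π
  constructor
  · rintro ⟨h1, h2, h3, h4⟩
    refine ⟨h1, fun p hp => ?_, h3, h4⟩
    have : p ≤ π.sum := List.single_le_sum (fun a _ => Nat.zero_le a) p hp
    omega
  · rintro ⟨h1, h2, h3, h4⟩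
    exact ⟨h1, fun p hp => le_trans (h2 p hp) (by omega), h3, h4⟩

lemma card_zero (n : ℕ) (k : ℤ) :
    (Nat.card (A 0 n k) : ℚ) = if n = 0 ∧ k = 0 then 1 else 0 := by
  by_cases h : n = 0 ∧ k = 0
  · obtain ⟨rfl, rfl⟩ := h
    rw [if_pos ⟨rfl, rfl⟩]
    norm_cast
    rw [Nat.card_eq_one_iff_unique]
    constructor
    · constructor
      intro x y
      have hx : x.1 = [] := by
        cases hx : x.1 with
        | nil => rfl
        | cons a t =>
          have h1 := x.2.1.2 a (by rw [hx]; simp)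
          have h2 := x.2.2.1 a (by rw [hx]; simp)
          omega
      have hy : y.1 = [] := by
        cases hy : y.1 with
        | nil => rfl
        | cons a t =>
          have h1 := y.2.1.2 a (by rw [hy]; simp)
          have h2 := y.2.2.1 a (by rw [hy]; simp)
          omega
      exact Subtype.ext (hx.trans hy.symm)
    · exact ⟨⟨[], ⟨List.isChain_nil, by simp⟩, by simp, by simp, bgRank_nil⟩⟩
  · rw [if_neg h]
    norm_cast
    rw [Nat.card_eq_zero]
    left
    constructor
    rintro ⟨π, h1, h2, h3, h4⟩
    have hπ : π = [] := by
      cases hπ : π with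
      | nil => rfl
      | cons a t =>
        have hh1 := h1.2 a (by rw [hπ]; simp)
        have hh2 := h2 a (by rw [hπ]; simp)
        omega
    subst hπ
    simp at h3
    rw [bgRank_nil] at h4
    exact h (by omega)

open PowerSeries

noncomputable def F (L : ℕ) (k : ℤ) : PowerSeries ℚ :=
  PowerSeries.mk fun n => (Nat.card (A L n k) : ℚ)

lemma F_zero (k : ℤ) : F 0 k = if k = 0 then 1 else 0 := by
  by_cases hk : k = 0
  · subst hk
    rw [if_pos rfl]
    ext n
    rw [F, coeff_mk, card_zero]
    by_cases hn : n = 0 <;> simp [hn, PowerSeries.coeff_one]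
  · rw [if_neg hk]
    ext n
    rw [F, coeff_mk, card_zero]
    simp [hk]

lemma F_rec (L : ℕ) (k : ℤ) :
    F (L+1) k = F L k + X^(L+1) * F (L+1) ((((L+1) % 2 : ℕ) : ℤ) - k) := by
  ext n
  rw [map_add, F, F, F, coeff_mk, coeff_mk, PowerSeries.coeff_X_pow_mul', coeff_mk]
  by_cases hn : L + 1 ≤ n
  · rw [if_pos hn, card_rec L n k hn]
    push_cast
    ring
  · rw [if_neg hn, card_eq_of_lt L n k (by omega)]
    ring

lemma F_rec2 (L : ℕ) (k : ℤ) :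
    (1 - X^(2*L+2)) * F (L+1) k
      = F L k + X^(L+1) * F L ((((L+1) % 2 : ℕ) : ℤ) - k) := by
  have h2 := F_rec L ((((L+1) % 2 : ℕ) : ℤ) - k)
  rw [show (((L+1) % 2 : ℕ) : ℤ) - ((((L+1) % 2 : ℕ) : ℤ) - k) = k by ring] at h2
  have h1 := F_rec L k
  rw [h2] at h1
  linear_combination h1

noncomputable def P (m : ℕ) : PowerSeries ℚ :=
  ∏ n ∈ Finset.range m, (1 - X ^ (2 * n + 2))

noncomputable def G (N ν : ℕ) (k : ℤ) : PowerSeries ℚ :=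
  if 0 ≤ (N : ℤ) + k ∧ 0 ≤ (N : ℤ) - k + ν then
    X ^ (2 * k ^ 2 - k).toNat * (P ((N : ℤ) + k).toNat * P ((N : ℤ) - k + ν).toNat)⁻¹
  else 0

lemma cc_u (j : ℕ) (hj : j ≠ 0) : constantCoeff (R := ℚ) (1 - X ^ j) = 1 := by
  rw [map_sub, map_one, map_pow, constantCoeff_X, zero_pow hj, sub_zero]

lemma u_ne (j : ℕ) (hj : j ≠ 0) : (1 - (X : PowerSeries ℚ) ^ j) ≠ 0 := fun h => by
  have := cc_u j hj
  rw [h, map_zero] at this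
  norm_num at this

lemma cc_P (m : ℕ) : constantCoeff (R := ℚ) (P m) = 1 := by
  rw [P, map_prod]
  apply Finset.prod_eq_one
  intro n _
  exact cc_u _ (by omega)

lemma P_succ (m : ℕ) : P (m + 1) = P m * (1 - X ^ (2 * m + 2)) :=
  Finset.prod_range_succ _ m

lemma P_zero : P 0 = 1 := Finset.prod_range_zero _

lemma inv_factor (Q R : PowerSeries ℚ) (hQ : constantCoeff (R := ℚ) Q = 1)
    (hR : constantCoeff (R := ℚ) R = 1) : Q⁻¹ = R * (Q * R)⁻¹ := by
  have hQ0 : Q ≠ 0 := fun h => by rw [h, map_zero] at hQ; norm_num at hQ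
  apply mul_right_cancel₀ hQ0
  rw [PowerSeries.inv_mul_cancel Q (by rw [hQ]; norm_num)]
  have : R * (Q * R)⁻¹ * Q = (Q * R)⁻¹ * (Q * R) := by ring
  rw [this, PowerSeries.inv_mul_cancel _ (by rw [map_mul, hQ, hR]; norm_num)]

lemma G_eo (N : ℕ) (k : ℤ) :
    (1 - (X : PowerSeries ℚ) ^ (2 * (2 * N) + 2)) * G N 1 k
      = G N 0 k + X ^ (2 * N + 1) * G N 0 (1 - k) := by
  by_cases hgen : 1 - (N : ℤ) ≤ k ∧ k ≤ N
  · -- generic case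
    rw [G, if_pos (by push_cast; omega), G, if_pos (by push_cast; omega),
      G, if_pos (by push_cast; omega)]
    rw [show ((N : ℤ) + k).toNat = ((N:ℤ)+k-1).toNat + 1 by omega,
      show ((N : ℤ) - k + (1:ℕ)).toNat = ((N:ℤ)-k).toNat + 1 by push_cast; omega,
      show ((N : ℤ) + (1-k)).toNat = ((N:ℤ)-k).toNat + 1 by omega,
      show ((N : ℤ) - (1-k) + (0:ℕ)).toNat = ((N:ℤ)+k-1).toNat by push_cast; omega,
      show ((N : ℤ) - k + (0:ℕ)).toNat = ((N:ℤ)-k).toNat by push_cast; omega]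
    set a' : ℕ := ((N:ℤ)+k-1).toNat with ha'
    set b : ℕ := ((N:ℤ)-k).toNat with hb
    set e1 : ℕ := (2*k^2 - k).toNat with he1
    set e2 : ℕ := (2*(1-k)^2 - (1-k)).toNat with he2
    have hab : a' + b = 2*N - 1 ∧ 1 ≤ 2*N := by constructor <;> omega
    have he1z : (e1 : ℤ) = 2*k^2 - k := Int.toNat_of_nonneg (by nlinarith)
    have he2z : (e2 : ℤ) = 2*(1-k)^2 - (1-k) := Int.toNat_of_nonneg (by nlinarith)
    have hbz : (b : ℤ) = (N:ℤ) - k := by omega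
    have hexp : 2*N+1+e2 = e1 + (2*b+2) := by
      have : (2*(N:ℤ)+1+e2 : ℤ) = (e1 : ℤ) + (2*(b:ℤ)+2) := by rw [he1z, he2z, hbz]; ring
      exact_mod_cast this
    have hexp2 : 2*(2*N)+2 = (2*a'+2) + (2*b+2) := by omega
    rw [P_succ a', P_succ b]
    have ccu_a : constantCoeff (R := ℚ) (1 - X^(2*a'+2)) = 1 := cc_u _ (by omega)
    have ccu_b : constantCoeff (R := ℚ) (1 - X^(2*b+2)) = 1 := cc_u _ (by omega)
    have m2 : P a' * (1 - X^(2*a'+2)) * P b * (1 - X^(2*b+2))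
        = P a' * (1 - X^(2*a'+2)) * (P b * (1 - X^(2*b+2))) := by ring
    have m3 : P b * (1 - X^(2*b+2)) * P a' * (1 - X^(2*a'+2))
        = P a' * (1 - X^(2*a'+2)) * (P b * (1 - X^(2*b+2))) := by ring
    have k2 : (P a' * (1 - X^(2*a'+2)) * P b)⁻¹
        = (1 - X^(2*b+2)) * (P a' * (1 - X^(2*a'+2)) * (P b * (1 - X^(2*b+2))))⁻¹ := by
      rw [inv_factor _ _ (by rw [map_mul, map_mul, cc_P, cc_P, ccu_a]; norm_num) ccu_b, m2]
    have k3 : (P b * (1 - X^(2*b+2)) * P a')⁻¹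
        = (1 - X^(2*a'+2)) * (P a' * (1 - X^(2*a'+2)) * (P b * (1 - X^(2*b+2))))⁻¹ := by
      rw [inv_factor _ _ (by rw [map_mul, map_mul, cc_P, cc_P, ccu_b]; norm_num) ccu_a, m3]
    rw [k2, k3, hexp2]
    have hX : (X : PowerSeries ℚ)^(2*N+1) * (X^e2 * ((1 - X^(2*a'+2)) *
        (P a' * (1 - X^(2*a'+2)) * (P b * (1 - X^(2*b+2))))⁻¹))
        = X^(e1 + (2*b+2)) * ((1 - X^(2*a'+2)) *
        (P a' * (1 - X^(2*a'+2)) * (P b * (1 - X^(2*b+2))))⁻¹) := by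
      rw [← mul_assoc, ← pow_add, ← hexp]
    rw [hX]
    ring
  · by_cases hlow : k = -(N : ℤ)
    · subst hlow
      rw [G, if_pos (by push_cast; omega), G, if_pos (by push_cast; omega),
        G, if_neg (by push_cast; omega)]
      rw [show ((N : ℤ) + -(N:ℤ)).toNat = 0 by omega,
        show ((N : ℤ) - -(N:ℤ) + (1:ℕ)).toNat = 2*N + 1 by push_cast; omega,
        show ((N : ℤ) - -(N:ℤ) + (0:ℕ)).toNat = 2*N by push_cast; omega]
      rw [P_succ (2*N)]
      have ccu : constantCoeff (R := ℚ) (1 - X^(2*(2*N)+2)) = 1 := cc_u _ (by omega)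
      have m2 : P 0 * P (2*N) * (1 - X^(2*(2*N)+2))
          = P 0 * (P (2*N) * (1 - X^(2*(2*N)+2))) := by ring
      have k2 : (P 0 * P (2*N))⁻¹
          = (1 - X^(2*(2*N)+2)) * (P 0 * (P (2*N) * (1 - X^(2*(2*N)+2))))⁻¹ := by
        rw [inv_factor _ _ (by rw [map_mul, cc_P, cc_P]; norm_num) ccu, m2]
      rw [k2]
      ring
    · by_cases hhigh : k = (N : ℤ) + 1
      · subst hhigh
        rw [G, if_pos (by push_cast; omega), G, if_neg (by push_cast; omega),
          G, if_pos (by push_cast; omega)]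
        rw [show ((N : ℤ) + ((N:ℤ)+1)).toNat = 2*N + 1 by omega,
          show ((N : ℤ) - ((N:ℤ)+1) + (1:ℕ)).toNat = 0 by push_cast; omega,
          show ((N : ℤ) + (1 - ((N:ℤ)+1))).toNat = 0 by omega,
          show ((N : ℤ) - (1 - ((N:ℤ)+1)) + (0:ℕ)).toNat = 2*N by push_cast; omega]
        set e1 : ℕ := (2*((N:ℤ)+1)^2 - ((N:ℤ)+1)).toNat with he1
        set e2 : ℕ := (2*(1-((N:ℤ)+1))^2 - (1-((N:ℤ)+1))).toNat with he2
        have he1z : (e1 : ℤ) = 2*((N:ℤ)+1)^2 - ((N:ℤ)+1) :=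
          Int.toNat_of_nonneg (by nlinarith [sq_nonneg ((N:ℤ)+1)])
        have he2z : (e2 : ℤ) = 2*(1-((N:ℤ)+1))^2 - (1-((N:ℤ)+1)) :=
          Int.toNat_of_nonneg (by nlinarith [sq_nonneg ((N:ℤ))])
        have hexp : e1 = 2*N+1+e2 := by
          have : (e1 : ℤ) = 2*(N:ℤ)+1+(e2:ℤ) := by rw [he1z, he2z]; ring
          exact_mod_cast this
        rw [P_succ (2*N)]
        have ccu : constantCoeff (R := ℚ) (1 - X^(2*(2*N)+2)) = 1 := cc_u _ (by omega)
        have m2 : P 0 * P (2*N) * (1 - X^(2*(2*N)+2))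
            = P (2*N) * (1 - X^(2*(2*N)+2)) * P 0 := by ring
        have k2 : (P 0 * P (2*N))⁻¹
            = (1 - X^(2*(2*N)+2)) * (P (2*N) * (1 - X^(2*(2*N)+2)) * P 0)⁻¹ := by
          rw [inv_factor _ _ (by rw [map_mul, cc_P, cc_P]; norm_num) ccu, m2]
        rw [k2]
        have hX : (X : PowerSeries ℚ)^(2*N+1) * (X^e2 * ((1 - X^(2*(2*N)+2)) *
            (P (2*N) * (1 - X^(2*(2*N)+2)) * P 0)⁻¹))
            = X^e1 * ((1 - X^(2*(2*N)+2)) * (P (2*N) * (1 - X^(2*(2*N)+2)) * P 0)⁻¹) := by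
          rw [← mul_assoc, ← pow_add, ← hexp]
        rw [hX]
        ring
      · rw [G, if_neg (by push_cast; omega), G, if_neg (by push_cast; omega),
          G, if_neg (by push_cast; omega)]
        simp

lemma G_oe (N : ℕ) (k : ℤ) :
    (1 - (X : PowerSeries ℚ) ^ (2 * (2 * N + 1) + 2)) * G (N + 1) 0 k
      = G N 1 k + X ^ (2 * N + 2) * G N 1 (-k) := by
  by_cases hgen : -(N : ℤ) ≤ k ∧ k ≤ N
  · rw [G, if_pos (by push_cast; omega), G, if_pos (by push_cast; omega),
      G, if_pos (by push_cast; omega)]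
    rw [show (((N+1 : ℕ) : ℤ) + k).toNat = ((N:ℤ)+k).toNat + 1 by push_cast; omega,
      show (((N+1 : ℕ) : ℤ) - k + (0:ℕ)).toNat = ((N:ℤ)-k).toNat + 1 by push_cast; omega,
      show ((N : ℤ) - k + (1:ℕ)).toNat = ((N:ℤ)-k).toNat + 1 by push_cast; omega,
      show ((N : ℤ) + -k).toNat = ((N:ℤ)-k).toNat by omega,
      show ((N : ℤ) - -k + (1:ℕ)).toNat = ((N:ℤ)+k).toNat + 1 by push_cast; omega]
    set a : ℕ := ((N:ℤ)+k).toNat with ha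
    set b : ℕ := ((N:ℤ)-k).toNat with hb
    set e1 : ℕ := (2*k^2 - k).toNat with he1
    set e3 : ℕ := (2*(-k)^2 - (-k)).toNat with he3
    have he1z : (e1 : ℤ) = 2*k^2 - k := Int.toNat_of_nonneg (by nlinarith)
    have he3z : (e3 : ℤ) = 2*k^2 + k := by
      rw [he3, show 2*(-k)^2 - (-k) = 2*k^2 + k by ring]
      exact Int.toNat_of_nonneg (by nlinarith)
    have haz : (a : ℤ) = (N:ℤ) + k := by omega
    have hexp : 2*N+2+e3 = e1 + (2*a+2) := by
      have : (2*(N:ℤ)+2+(e3:ℤ)) = (e1 : ℤ) + (2*(a:ℤ)+2) := by rw [he1z, he3z, haz]; ring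
      exact_mod_cast this
    have hexp2 : 2*(2*N+1)+2 = (2*a+2) + (2*b+2) := by omega
    rw [P_succ a, P_succ b]
    have ccu_a : constantCoeff (R := ℚ) (1 - X^(2*a+2)) = 1 := cc_u _ (by omega)
    have ccu_b : constantCoeff (R := ℚ) (1 - X^(2*b+2)) = 1 := cc_u _ (by omega)
    have m2 : P a * (P b * (1 - X^(2*b+2))) * (1 - X^(2*a+2))
        = P a * (1 - X^(2*a+2)) * (P b * (1 - X^(2*b+2))) := by ring
    have m3 : P b * (P a * (1 - X^(2*a+2))) * (1 - X^(2*b+2))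
        = P a * (1 - X^(2*a+2)) * (P b * (1 - X^(2*b+2))) := by ring
    have k2 : (P a * (P b * (1 - X^(2*b+2))))⁻¹
        = (1 - X^(2*a+2)) * (P a * (1 - X^(2*a+2)) * (P b * (1 - X^(2*b+2))))⁻¹ := by
      rw [inv_factor _ _ (by rw [map_mul, map_mul, cc_P, cc_P, ccu_b]; norm_num) ccu_a, m2]
    have k3 : (P b * (P a * (1 - X^(2*a+2))))⁻¹
        = (1 - X^(2*b+2)) * (P a * (1 - X^(2*a+2)) * (P b * (1 - X^(2*b+2))))⁻¹ := by
      rw [inv_factor _ _ (by rw [map_mul, map_mul, cc_P, cc_P, ccu_a]; norm_num) ccu_b, m3]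
    rw [k2, k3, hexp2]
    have hX : (X : PowerSeries ℚ)^(2*N+2) * (X^e3 * ((1 - X^(2*b+2)) *
        (P a * (1 - X^(2*a+2)) * (P b * (1 - X^(2*b+2))))⁻¹))
        = X^(e1 + (2*a+2)) * ((1 - X^(2*b+2)) *
        (P a * (1 - X^(2*a+2)) * (P b * (1 - X^(2*b+2))))⁻¹) := by
      rw [← mul_assoc, ← pow_add, ← hexp]
    rw [hX]
    ring
  · by_cases hhigh : k = (N : ℤ) + 1
    · subst hhigh
      rw [G, if_pos (by push_cast; omega), G, if_pos (by push_cast; omega),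
        G, if_neg (by push_cast; omega)]
      rw [show (((N+1 : ℕ) : ℤ) + ((N:ℤ)+1)).toNat = 2*N+1 + 1 by push_cast; omega,
        show (((N+1 : ℕ) : ℤ) - ((N:ℤ)+1) + (0:ℕ)).toNat = 0 by push_cast; omega,
        show ((N : ℤ) + ((N:ℤ)+1)).toNat = 2*N+1 by omega,
        show ((N : ℤ) - ((N:ℤ)+1) + (1:ℕ)).toNat = 0 by push_cast; omega]
      rw [P_succ (2*N+1)]
      have ccu : constantCoeff (R := ℚ) (1 - X^(2*(2*N+1)+2)) = 1 := cc_u _ (by omega)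
      have m2 : P (2*N+1) * P 0 * (1 - X^(2*(2*N+1)+2))
          = P (2*N+1) * (1 - X^(2*(2*N+1)+2)) * P 0 := by ring
      have k2 : (P (2*N+1) * P 0)⁻¹
          = (1 - X^(2*(2*N+1)+2)) * (P (2*N+1) * (1 - X^(2*(2*N+1)+2)) * P 0)⁻¹ := by
        rw [inv_factor _ _ (by rw [map_mul, cc_P, cc_P]; norm_num) ccu, m2]
      rw [k2]
      ring
    · by_cases hlow : k = -((N : ℤ) + 1)
      · subst hlow
        rw [G, if_pos (by push_cast; omega), G, if_neg (by push_cast; omega),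
          G, if_pos (by push_cast; omega)]
        rw [show (((N+1 : ℕ) : ℤ) + -((N:ℤ)+1)).toNat = 0 by push_cast; omega,
          show (((N+1 : ℕ) : ℤ) - -((N:ℤ)+1) + (0:ℕ)).toNat = 2*N+1+1 by push_cast; omega,
          show ((N : ℤ) + - -((N:ℤ)+1)).toNat = 2*N+1 by omega,
          show ((N : ℤ) - - -((N:ℤ)+1) + (1:ℕ)).toNat = 0 by push_cast; omega]
        set e1 : ℕ := (2*(-((N:ℤ)+1))^2 - (-((N:ℤ)+1))).toNat with he1
        set e3 : ℕ := (2*(- -((N:ℤ)+1))^2 - (- -((N:ℤ)+1))).toNat with he3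
        have he1z : (e1 : ℤ) = 2*((N:ℤ)+1)^2 + ((N:ℤ)+1) := by
          rw [he1, show 2*(-((N:ℤ)+1))^2 - (-((N:ℤ)+1)) = 2*((N:ℤ)+1)^2 + ((N:ℤ)+1) by ring]
          exact Int.toNat_of_nonneg (by positivity)
        have he3z : (e3 : ℤ) = 2*((N:ℤ)+1)^2 - ((N:ℤ)+1) := by
          rw [he3, show (- -((N:ℤ)+1)) = ((N:ℤ)+1) by ring]
          exact Int.toNat_of_nonneg (by nlinarith [sq_nonneg ((N:ℤ))])
        have hexp : e1 = 2*N+2+e3 := by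
          have : (e1 : ℤ) = 2*(N:ℤ)+2+(e3:ℤ) := by rw [he1z, he3z]; ring
          exact_mod_cast this
        rw [P_succ (2*N+1)]
        have ccu : constantCoeff (R := ℚ) (1 - X^(2*(2*N+1)+2)) = 1 := cc_u _ (by omega)
        have m2 : P (2*N+1) * P 0 * (1 - X^(2*(2*N+1)+2))
            = P 0 * (P (2*N+1) * (1 - X^(2*(2*N+1)+2))) := by ring
        have k2 : (P (2*N+1) * P 0)⁻¹
            = (1 - X^(2*(2*N+1)+2)) * (P 0 * (P (2*N+1) * (1 - X^(2*(2*N+1)+2))))⁻¹ := by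
          rw [inv_factor _ _ (by rw [map_mul, cc_P, cc_P]; norm_num) ccu, m2]
        rw [k2]
        have hX : (X : PowerSeries ℚ)^(2*N+2) * (X^e3 * ((1 - X^(2*(2*N+1)+2)) *
            (P 0 * (P (2*N+1) * (1 - X^(2*(2*N+1)+2))))⁻¹))
            = X^e1 * ((1 - X^(2*(2*N+1)+2)) *
            (P 0 * (P (2*N+1) * (1 - X^(2*(2*N+1)+2))))⁻¹) := by
          rw [← mul_assoc, ← pow_add, ← hexp]
        rw [hX]
        ring
      · rw [G, if_neg (by push_cast; omega), G, if_neg (by push_cast; omega),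
          G, if_neg (by push_cast; omega)]
        simp

lemma G_zero (k : ℤ) : G 0 0 k = if k = 0 then 1 else 0 := by
  by_cases hk : k = 0
  · subst hk
    rw [G, if_pos (by norm_num)]
    norm_num [P_zero]
  · rw [if_neg hk, G, if_neg (by push_cast; omega)]

lemma G_rec (L : ℕ) (k : ℤ) :
    (1 - (X : PowerSeries ℚ) ^ (2 * L + 2)) * G ((L+1)/2) ((L+1)%2) k
      = G (L/2) (L%2) k + X ^ (L+1) * G (L/2) (L%2) ((((L+1) % 2 : ℕ) : ℤ) - k) := by
  rcases Nat.even_or_odd L with ⟨N, rfl⟩ | ⟨N, rfl⟩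
  · rw [show (N+N+1)/2 = N by omega, show (N+N+1)%2 = 1 by omega,
      show (N+N)/2 = N by omega, show (N+N)%2 = 0 by omega]
    have h := G_eo N k
    rw [show 2*(2*N)+2 = 2*(N+N)+2 by ring, show 2*N+1 = N+N+1 by ring] at h
    rw [show (((1:ℕ)):ℤ) - k = 1 - k by push_cast; ring]
    exact h
  · rw [show (2*N+1+1)/2 = N+1 by omega, show (2*N+1+1)%2 = 0 by omega,
      show (2*N+1)/2 = N by omega, show (2*N+1)%2 = 1 by omega]
    have h := G_oe N k
    rw [show 2*(2*N+1)+2 = 2*(2*N+1)+2 by ring, show 2*N+2 = 2*N+1+1 by ring] at h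
    rw [show (((0:ℕ)):ℤ) - k = -k by push_cast; ring]
    exact h


lemma F_eq_G : ∀ (L : ℕ) (k : ℤ), F L k = G (L/2) (L%2) k := by
  intro L
  induction L with
  | zero => intro k; rw [F_zero, G_zero]
  | succ L ih =>
    intro k
    have hne : (1 - (X : PowerSeries ℚ) ^ (2*L+2)) ≠ 0 := u_ne _ (by omega)
    apply mul_left_cancel₀ hne
    rw [F_rec2 L k, ih k, ih _, G_rec L k]

end Stmt9Aux

theorem stmt9 (N ν : ℕ) (hν : ν ≤ 1) (k : ℤ) :
    PowerSeries.mk (fun n =>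
      (Nat.card {π : List ℕ // IsPartition π ∧ (∀ p ∈ π, p ≤ 2 * N + ν) ∧
        π.sum = n ∧ bgRank π = k} : ℚ)) =
    if 0 ≤ (N : ℤ) + k ∧ 0 ≤ (N : ℤ) - k + ν then
      PowerSeries.X ^ (2 * k ^ 2 - k).toNat *
        ((∏ n ∈ Finset.range ((N : ℤ) + k).toNat,
            (1 - (PowerSeries.X : PowerSeries ℚ) ^ (2 * n + 2))) *
         (∏ n ∈ Finset.range ((N : ℤ) - k + ν).toNat,
            (1 - PowerSeries.X ^ (2 * n + 2))))⁻¹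
    else 0 := by
  have h := Stmt9Aux.F_eq_G (2*N+ν) k
  rw [show (2*N+ν)/2 = N by omega, show (2*N+ν)%2 = ν by omega] at h
  exact h
end

section
/- For ν ∈ {0,1} and nonnegative integer N, Σ_{k=−N}^{N+ν} q^{2k²−k} / ((q²;q²)_{N+k} (q²;q²)_{N−k+ν}) = 1/(q;q)_{2N+ν}, as an identity of formal power series in q. -/
open Finset PowerSeries

local notation "Xq" => (PowerSeries.X : PowerSeries ℚ)

noncomputable def PP (a : ℕ) : PowerSeries ℚ := ∏ n ∈ Finset.range a, (1 - Xq ^ (2*n+2))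
noncomputable def QQ (a : ℕ) : PowerSeries ℚ := ∏ n ∈ Finset.range a, (1 - Xq ^ (n+1))

lemma PP_zero : PP 0 = 1 := Finset.prod_range_zero _
lemma PP_succ (a : ℕ) : PP (a+1) = PP a * (1 - Xq ^ (2*a+2)) := Finset.prod_range_succ _ _
lemma QQ_succ (a : ℕ) : QQ (a+1) = QQ a * (1 - Xq ^ (a+1)) := Finset.prod_range_succ _ _

lemma cc_PP (a : ℕ) : constantCoeff (PP a) = 1 := by
  induction a with
  | zero => simp [PP_zero]
  | succ n ih =>
      rw [PP_succ, map_mul, ih, map_sub, map_one, map_pow, constantCoeff_X,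
        zero_pow (by omega), sub_zero, one_mul]

lemma cc_QQ (a : ℕ) : constantCoeff (QQ a) = 1 := by
  induction a with
  | zero => simp [QQ]
  | succ n ih =>
      rw [QQ_succ, map_mul, ih, map_sub, map_one, map_pow, constantCoeff_X,
        zero_pow (by omega), sub_zero, one_mul]

lemma PP_ne (a : ℕ) : PP a ≠ 0 := fun h => by simpa [h] using cc_PP a

noncomputable def gb : ℕ → ℕ → PowerSeries ℚ
  | _, 0 => 1
  | 0, _+1 => 0
  | m+1, r+1 => gb m r + Xq ^ (2*r+2) * gb m (r+1)

lemma gb_zero (m : ℕ) : gb m 0 = 1 := by cases m <;> rfl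

lemma gb_succ (m r : ℕ) : gb (m+1) (r+1) = gb m r + Xq ^ (2*r+2) * gb m (r+1) := rfl

lemma gb_big : ∀ m r : ℕ, m < r → gb m r = 0
  | 0, _+1, _ => rfl
  | m+1, r+1, h => by
      rw [gb_succ, gb_big m r (by omega), gb_big m (r+1) (by omega), mul_zero, add_zero]

lemma gb_diag (m : ℕ) : gb m m = 1 := by
  induction m with
  | zero => rfl
  | succ n ih => rw [gb_succ, ih, gb_big n (n+1) (by omega), mul_zero, add_zero]

lemma gb_mul : ∀ m r : ℕ, r ≤ m → gb m r * (PP r * PP (m - r)) = PP m := by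
  intro m
  induction m with
  | zero => intro r hr; interval_cases r; simp [gb_zero, PP_zero]
  | succ m ih =>
      intro r hr
      match r with
      | 0 => simp [gb_zero, PP_zero]
      | s+1 =>
        rcases eq_or_lt_of_le (Nat.succ_le_succ_iff.mp hr) with hs | hs
        · subst hs
          rw [gb_succ, gb_diag, gb_big s (s+1) (by omega), mul_zero, add_zero,
            Nat.sub_self, PP_zero, mul_one, one_mul]
        · -- s < m
          have h1 := ih s (by omega)
          have h2 := ih (s+1) (by omega)
          have hms : m - s = (m - s - 1) + 1 := by omega
          have hms2 : m - (s+1) = m - s - 1 := by omega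
          rw [hms2] at h2
          rw [gb_succ, show m + 1 - (s+1) = m - s from by omega, hms,
            PP_succ (m - s - 1), PP_succ s, PP_succ m]
          rw [hms, PP_succ (m - s - 1)] at h1
          rw [PP_succ s] at h2
          have hx : Xq ^ (2*s+2) * Xq ^ (2*(m - s - 1)+2) = Xq ^ (2*m+2) := by
            rw [← pow_add]; congr 1; omega
          linear_combination (1 - Xq ^ (2*s+2)) * h1
            + Xq ^ (2*s+2) * (1 - Xq ^ (2*(m-s-1)+2)) * h2
            - PP m * hx

lemma gb_symm {m r : ℕ} (h : r ≤ m) : gb m r = gb m (m - r) := by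
  have h1 := gb_mul m r h
  have h2 := gb_mul m (m - r) (by omega)
  rw [show m - (m - r) = r from by omega] at h2
  have hne : (PP r * PP (m - r)) ≠ 0 := by
    intro hc
    have := congrArg constantCoeff hc
    rw [map_mul, cc_PP, cc_PP, map_zero] at this
    norm_num at this
  apply mul_right_cancel₀ hne
  rw [h1, mul_comm (PP r) (PP (m-r)), h2]

lemma gb_pascal2 {m r : ℕ} (h : r ≤ m) :
    gb (m+1) (r+1) = Xq ^ (2*(m-r)) * gb m r + gb m (r+1) := by
  rcases eq_or_lt_of_le h with hr | hr
  · subst hr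
    rw [Nat.sub_self, pow_zero, one_mul, gb_diag, gb_diag, gb_big r (r+1) (by omega), add_zero]
  · have hsym : gb (m+1) (r+1) = gb (m+1) (m - r) := by
      rw [gb_symm (show r+1 ≤ m+1 from by omega), show m+1-(r+1) = m - r from by omega]
    have e1 : gb m (m - r - 1) = gb m (r+1) := by
      rw [gb_symm (show m - r - 1 ≤ m from by omega), show m - (m-r-1) = r+1 from by omega]
    have e2 : gb m (m - r - 1 + 1) = gb m r := by
      rw [show m - r - 1 + 1 = m - r from by omega,
        gb_symm (show m - r ≤ m from by omega), show m - (m - r) = r from by omega]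
    rw [hsym, show m - r = (m - r - 1) + 1 from by omega, gb_succ, e1, e2,
      show (2:ℕ)*(m-r-1)+2 = 2*(m-r-1+1) from by omega]
    ring

noncomputable def gbz (m : ℕ) (j : ℤ) : PowerSeries ℚ :=
  if 0 ≤ j then gb m j.toNat else 0

lemma gbz_zero {m : ℕ} {j : ℤ} (h : j < 0 ∨ (m:ℤ) < j) : gbz m j = 0 := by
  rcases h with h | h
  · rw [gbz, if_neg (by omega)]
  · rw [gbz, if_pos (by omega)]
    exact gb_big m j.toNat (by omega)

lemma gbz_ofNat (m a : ℕ) : gbz m (a : ℤ) = gb m a := by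
  rw [gbz, if_pos (by positivity), Int.toNat_natCast]

lemma gbz_pascal1 (m : ℕ) (j : ℤ) :
    gbz (m+1) j = gbz m (j-1) + Xq ^ (2*j).toNat * gbz m j := by
  rcases lt_trichotomy j 0 with hj | hj | hj
  · rw [gbz_zero (Or.inl hj), gbz_zero (Or.inl (show j - 1 < 0 from by omega)),
      gbz_zero (Or.inl hj), mul_zero, add_zero]
  · subst hj
    rw [gbz_zero (Or.inl (show (0:ℤ)-1 < 0 from by omega))]
    simp [gbz, gb_zero]
  · -- 1 ≤ j
    obtain ⟨r, hr⟩ : ∃ r : ℕ, j = (r : ℤ) + 1 := ⟨(j-1).toNat, by omega⟩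
    subst hr
    rw [show ((r:ℤ)+1) - 1 = (r:ℤ) from by ring, gbz_ofNat,
      show ((r:ℤ)+1) = ((r+1 : ℕ) : ℤ) from by push_cast; ring, gbz_ofNat, gbz_ofNat,
      show (2*((r+1:ℕ):ℤ)).toNat = 2*r+2 from by omega, gb_succ]

lemma gbz_pascal2 (m : ℕ) (j : ℤ) :
    gbz (m+1) j = Xq ^ (2*((m:ℤ)+1-j)).toNat * gbz m (j-1) + gbz m j := by
  rcases lt_trichotomy j 0 with hj | hj | hj
  · rw [gbz_zero (Or.inl hj), gbz_zero (Or.inl (show j - 1 < 0 from by omega)),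
      gbz_zero (Or.inl hj), mul_zero, add_zero]
  · subst hj
    rw [gbz_zero (Or.inl (show (0:ℤ)-1 < 0 from by omega)), mul_zero, zero_add]
    rw [show ((0:ℤ)) = ((0:ℕ):ℤ) from rfl, gbz_ofNat, gbz_ofNat, gb_zero, gb_zero]
  · obtain ⟨r, hr⟩ : ∃ r : ℕ, j = (r : ℤ) + 1 := ⟨(j-1).toNat, by omega⟩
    subst hr
    rcases le_or_gt (r+1) (m+1) with hrm | hrm
    · have hrm' : r ≤ m := by omega
      rw [show ((r:ℤ)+1) - 1 = (r:ℤ) from by ring, gbz_ofNat,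
        show ((r:ℤ)+1) = ((r+1 : ℕ) : ℤ) from by push_cast; ring, gbz_ofNat, gbz_ofNat,
        show (2*((m:ℤ)+1-((r+1:ℕ):ℤ))).toNat = 2*(m-r) from by omega]
      exact gb_pascal2 hrm'
    · rw [gbz_zero (Or.inr (show ((m+1:ℕ):ℤ) < (r:ℤ)+1 from by push_cast; omega)),
        gbz_zero (Or.inr (show ((m:ℕ):ℤ) < (r:ℤ)+1-1 from by push_cast; omega)),
        gbz_zero (Or.inr (show ((m:ℕ):ℤ) < (r:ℤ)+1 from by push_cast; omega)),
        mul_zero, add_zero]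

lemma gbz_symm (m : ℕ) (j : ℤ) : gbz m j = gbz m ((m:ℤ) - j) := by
  rcases lt_trichotomy j 0 with hj | hj | hj
  · rw [gbz_zero (Or.inl hj), gbz_zero (Or.inr (show (m:ℤ) < (m:ℤ) - j from by omega))]
  · subst hj
    rw [sub_zero, show ((0:ℤ)) = ((0:ℕ):ℤ) from rfl, gbz_ofNat, gbz_ofNat, gb_zero, gb_diag]
  · rcases le_or_gt j (m:ℤ) with hjm | hjm
    · obtain ⟨r, hr⟩ : ∃ r : ℕ, j = (r : ℤ) := ⟨j.toNat, by omega⟩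
      subst hr
      have hrm : r ≤ m := by omega
      rw [gbz_ofNat, show (m:ℤ) - (r:ℤ) = ((m - r : ℕ) : ℤ) from by push_cast [hrm]; ring,
        gbz_ofNat]
      exact gb_symm hrm
    · rw [gbz_zero (Or.inr hjm), gbz_zero (Or.inl (show (m:ℤ) - j < 0 from by omega))]

lemma quad1 (k : ℤ) : 0 ≤ 2*k^2 - k := by nlinarith [sq_nonneg k, sq_nonneg (k-1), sq_nonneg (2*k-1)]

lemma quad2 (k : ℤ) : 0 ≤ 2*k^2 + k := by nlinarith [sq_nonneg k, sq_nonneg (k+1), sq_nonneg (2*k+1)]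

def fA : ℤ → ℕ := fun k => (2*k^2-k).toNat
def fB : ℤ → ℕ := fun k => (2*k^2+k).toNat
def fC : ℤ → ℕ := fun k => (2*k^2-3*k+1).toNat
def eE (N : ℕ) : ℤ → ℕ := fun k => (2*((N:ℤ)+1-k)).toNat
def eO (N : ℕ) : ℤ → ℕ := fun k => (2*((N:ℤ)+1+k)).toNat

noncomputable def term (m : ℕ) (d : ℤ) (e : ℤ → ℕ) (k : ℤ) : PowerSeries ℚ :=
  Xq ^ e k * gbz m (d + k)

noncomputable def term2 (m : ℕ) (d : ℤ) (e e' : ℤ → ℕ) (k : ℤ) : PowerSeries ℚ :=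
  Xq ^ e k * (Xq ^ e' k * gbz m (d + k))

noncomputable def SS (m : ℕ) : PowerSeries ℚ :=
  ∑ k ∈ Finset.Icc (-(m:ℤ)-1) ((m:ℤ)+1), term m ((m/2 : ℕ) : ℤ) fA k

lemma sum_renorm (m : ℕ) (e : ℤ → ℕ) (d a b a' b' : ℤ)
    (ha : a ≤ -d) (hb : (m:ℤ) - d ≤ b) (ha' : a' ≤ -d) (hb' : (m:ℤ) - d ≤ b') :
    ∑ k ∈ Finset.Icc a b, term m d e k = ∑ k ∈ Finset.Icc a' b', term m d e k := by
  have core : ∀ (u v : ℤ), u ≤ -d → (m:ℤ) - d ≤ v →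
      ∑ k ∈ Finset.Icc u v, term m d e k
        = ∑ k ∈ Finset.Icc (-d) ((m:ℤ)-d), term m d e k := by
    intro u v hu hv
    refine (Finset.sum_subset (Finset.Icc_subset_Icc hu hv) ?_).symm
    intro k hk hk'
    simp only [Finset.mem_Icc] at hk hk'
    push_neg at hk'
    have h : d + k < 0 ∨ (m:ℤ) < d + k := by omega
    rw [term, gbz_zero h, mul_zero]
  rw [core a b ha hb, core a' b' ha' hb']

lemma sum_reindex (F : ℤ → PowerSeries ℚ) (a b a' b' c ε : ℤ) (hε : ε = 1 ∨ ε = -1)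
    (h1 : ∀ k, a' ≤ k ∧ k ≤ b' → a ≤ ε*k+c ∧ ε*k+c ≤ b)
    (h2 : ∀ k, a ≤ k ∧ k ≤ b → a' ≤ ε*(k-c) ∧ ε*(k-c) ≤ b') :
    ∑ k ∈ Finset.Icc a b, F k = ∑ k ∈ Finset.Icc a' b', F (ε*k+c) := by
  have hsq : ε * ε = 1 := by rcases hε with h | h <;> simp [h]
  refine Finset.sum_nbij' (i := fun k => ε*(k-c)) (j := fun k => ε*k+c) ?_ ?_ ?_ ?_ ?_
  · intro k hk
    simp only [Finset.mem_Icc] at hk ⊢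
    exact h2 k hk
  · intro k hk
    simp only [Finset.mem_Icc] at hk ⊢
    exact h1 k hk
  · intro k _
    have : ε * (ε * (k - c)) + c = k := by
      rw [← mul_assoc, hsq]; ring
    simpa using this
  · intro k _
    have : ε * (ε * k + c - c) = k := by
      rw [show ε * k + c - c = ε * k from by ring, ← mul_assoc, hsq, one_mul]
    simpa using this
  · intro k _
    have h : ε * (ε * (k - c)) + c = k := by rw [← mul_assoc, hsq]; ring
    rw [h]

lemma step_even (N : ℕ) : SS (2*N+1) = (1 + Xq^(2*N+1)) * SS (2*N) := by
  have hdiv1 : (2*N+1)/2 = N := by omega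
  have hdiv0 : (2*N)/2 = N := by omega
  unfold SS
  simp only [hdiv1, hdiv0]
  have split : ∀ k ∈ Finset.Icc (-(((2*N+1):ℕ):ℤ)-1) ((((2*N+1):ℕ):ℤ)+1),
      term (2*N+1) ((N:ℕ):ℤ) fA k
        = term2 (2*N) ((N:ℤ)-1) fA (eE N) k + term (2*N) ((N:ℕ):ℤ) fA k := by
    intro k _
    rw [term, term2, term, gbz_pascal2 (2*N) ((N:ℤ)+k)]
    rw [show ((N:ℤ) + k - 1) = ((N:ℤ)-1) + k from by ring,
      show (2*(((2*N:ℕ):ℤ)+1-((N:ℤ)+k))).toNat = eE N k from by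
        rw [eE]; congr 1; push_cast; ring]
    ring
  rw [Finset.sum_congr rfl split, Finset.sum_add_distrib]
  have hT2 := sum_renorm (2*N) fA ((N:ℕ):ℤ)
      (-(((2*N+1):ℕ):ℤ)-1) ((((2*N+1):ℕ):ℤ)+1) (-(((2*N):ℕ):ℤ)-1) ((((2*N):ℕ):ℤ)+1)
      (by push_cast; omega) (by push_cast; omega) (by push_cast; omega) (by push_cast; omega)
  have hT1 : ∑ k ∈ Finset.Icc (-(((2*N+1):ℕ):ℤ)-1) ((((2*N+1):ℕ):ℤ)+1),
      term2 (2*N) ((N:ℤ)-1) fA (eE N) k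
      = Xq^(2*N+1) * ∑ k ∈ Finset.Icc (-(((2*N):ℕ):ℤ)-1) ((((2*N):ℕ):ℤ)+1),
          term (2*N) ((N:ℕ):ℤ) fA k := by
    rw [sum_reindex (term2 (2*N) ((N:ℤ)-1) fA (eE N))
        (-(((2*N+1):ℕ):ℤ)-1) ((((2*N+1):ℕ):ℤ)+1) (-(((2*N+1):ℕ):ℤ)-2) (((2*N+1):ℕ):ℤ) 1 1
        (Or.inl rfl) (fun k hk => by omega) (fun k hk => by omega)]
    have step1 : ∀ k ∈ Finset.Icc (-(((2*N+1):ℕ):ℤ)-2) (((2*N+1):ℕ):ℤ),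
        term2 (2*N) ((N:ℤ)-1) fA (eE N) (1*k+1)
        = Xq^(2*N+1) * term (2*N) ((N:ℕ):ℤ) fB k := by
      intro k _
      rw [term2, term, fA, fB, eE]

      rw [show ((N:ℤ) - 1 + (1*k+1)) = (N:ℤ) + k from by ring]
      by_cases hk : 0 ≤ (N:ℤ)+k ∧ (N:ℤ)+k ≤ ((2*N:ℕ):ℤ)
      · rw [show (2*(1*k+1)^2 - (1*k+1) : ℤ) = 2*k^2+3*k+1 from by ring,
          show (2*((N:ℤ)+1-(1*k+1))) = 2*(N:ℤ)-2*k from by ring]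
        have q2 := quad2 k
        have q3 : (0:ℤ) ≤ 2*k^2+3*k+1 := by nlinarith [quad1 (k+1)]
        obtain ⟨hk1, hk2⟩ := hk
        push_cast at hk2
        have hexp : (2*k^2+3*k+1 : ℤ).toNat + (2*(N:ℤ)-2*k).toNat
            = (2*N+1) + (2*k^2+k : ℤ).toNat := by
          generalize k^2 = q at q2 q3 ⊢
          omega
        rw [← mul_assoc, ← pow_add, hexp, pow_add, mul_assoc]
      · have h0 : gbz (2*N) ((N:ℤ)+k) = 0 := by
          apply gbz_zero
          push_neg at hk
          omega
        rw [h0, mul_zero, mul_zero, mul_zero, mul_zero]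
    rw [Finset.sum_congr rfl step1, ← Finset.mul_sum]
    congr 1
    rw [sum_reindex (term (2*N) ((N:ℕ):ℤ) fB)
        (-(((2*N+1):ℕ):ℤ)-2) (((2*N+1):ℕ):ℤ) (-(((2*N+1):ℕ):ℤ)) ((((2*N+1):ℕ):ℤ)+2) 0 (-1)
        (Or.inr rfl) (fun k hk => by omega) (fun k hk => by omega)]
    have step2 : ∀ k ∈ Finset.Icc (-(((2*N+1):ℕ):ℤ)) ((((2*N+1):ℕ):ℤ)+2),
        term (2*N) ((N:ℕ):ℤ) fB (-1*k+0) = term (2*N) ((N:ℕ):ℤ) fA k := by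
      intro k _
      rw [term, term, fA, fB]

      rw [show (2*(-1*k+0)^2 + (-1*k+0) : ℤ) = 2*k^2 - k from by ring,
        show ((N:ℤ) + (-1*k+0)) = (N:ℤ) - k from by ring]
      congr 1
      have hs := gbz_symm (2*N) ((N:ℤ)+k)
      rw [show ((2*N:ℕ):ℤ) - ((N:ℤ)+k) = (N:ℤ) - k from by push_cast; ring] at hs
      exact hs.symm
    rw [Finset.sum_congr rfl step2]
    exact sum_renorm (2*N) fA ((N:ℕ):ℤ) _ _ _ _
      (by push_cast; omega) (by push_cast; omega) (by push_cast; omega) (by push_cast; omega)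
  rw [hT1, hT2]
  ring

lemma step_odd (N : ℕ) : SS (2*N+1+1) = (1 + Xq^(2*N+1+1)) * SS (2*N+1) := by
  have hdiv2 : (2*N+1+1)/2 = N+1 := by omega
  have hdiv1 : (2*N+1)/2 = N := by omega
  unfold SS
  simp only [hdiv2, hdiv1]
  have split : ∀ k ∈ Finset.Icc (-(((2*N+1+1):ℕ):ℤ)-1) ((((2*N+1+1):ℕ):ℤ)+1),
      term (2*N+1+1) (((N+1):ℕ):ℤ) fA k
        = term (2*N+1) ((N:ℕ):ℤ) fA k + term2 (2*N+1) ((N:ℤ)+1) fA (eO N) k := by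
    intro k _
    rw [term, term2, term, gbz_pascal1 (2*N+1) ((((N+1):ℕ):ℤ)+k)]
    rw [show ((((N+1):ℕ):ℤ) + k - 1) = (N:ℤ) + k from by push_cast; ring,
      show ((((N+1):ℕ):ℤ) + k) = ((N:ℤ)+1) + k from by push_cast; ring,
      show (2*(((N:ℤ)+1)+k)).toNat = eO N k from by rw [eO]]
    ring
  rw [Finset.sum_congr rfl split, Finset.sum_add_distrib]
  have hT1 := sum_renorm (2*N+1) fA ((N:ℕ):ℤ)
      (-(((2*N+1+1):ℕ):ℤ)-1) ((((2*N+1+1):ℕ):ℤ)+1) (-(((2*N+1):ℕ):ℤ)-1) ((((2*N+1):ℕ):ℤ)+1)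
      (by push_cast; omega) (by push_cast; omega) (by push_cast; omega) (by push_cast; omega)
  have hT2 : ∑ k ∈ Finset.Icc (-(((2*N+1+1):ℕ):ℤ)-1) ((((2*N+1+1):ℕ):ℤ)+1),
      term2 (2*N+1) ((N:ℤ)+1) fA (eO N) k
      = Xq^(2*N+1+1) * ∑ k ∈ Finset.Icc (-(((2*N+1):ℕ):ℤ)-1) ((((2*N+1):ℕ):ℤ)+1),
          term (2*N+1) ((N:ℕ):ℤ) fA k := by
    rw [sum_reindex (term2 (2*N+1) ((N:ℤ)+1) fA (eO N))
        (-(((2*N+1+1):ℕ):ℤ)-1) ((((2*N+1+1):ℕ):ℤ)+1)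
        (-(((2*N+1+1):ℕ):ℤ)) ((((2*N+1+1):ℕ):ℤ)+2) (-1) 1
        (Or.inl rfl) (fun k hk => by omega) (fun k hk => by omega)]
    have step1 : ∀ k ∈ Finset.Icc (-(((2*N+1+1):ℕ):ℤ)) ((((2*N+1+1):ℕ):ℤ)+2),
        term2 (2*N+1) ((N:ℤ)+1) fA (eO N) (1*k+(-1))
        = Xq^(2*N+1+1) * term (2*N+1) ((N:ℕ):ℤ) fC k := by
      intro k _
      rw [term2, term, fA, fC, eO]
      rw [show ((N:ℤ) + 1 + (1*k+(-1))) = (N:ℤ) + k from by ring]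
      by_cases hk : 0 ≤ (N:ℤ)+k ∧ (N:ℤ)+k ≤ ((2*N+1:ℕ):ℤ)
      · rw [show (2*(1*k+(-1))^2 - (1*k+(-1)) : ℤ) = 2*k^2-5*k+3 from by ring,
          show (2*((N:ℤ)+k) : ℤ) = 2*(N:ℤ)+2*k from by ring]
        have q3 : (0:ℤ) ≤ 2*k^2-5*k+3 := by nlinarith [quad1 (k-1)]
        have qC : (0:ℤ) ≤ 2*k^2-3*k+1 := by nlinarith [quad2 (k-1)]
        obtain ⟨hk1, hk2⟩ := hk
        push_cast at hk2
        have hexp : (2*k^2-5*k+3 : ℤ).toNat + (2*(N:ℤ)+2*k).toNat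
            = (2*N+1+1) + (2*k^2-3*k+1 : ℤ).toNat := by
          generalize k^2 = q at q3 qC ⊢
          omega
        rw [← mul_assoc, ← pow_add, hexp, pow_add, mul_assoc]
      · have h0 : gbz (2*N+1) ((N:ℤ)+k) = 0 := by
          apply gbz_zero
          push_neg at hk
          omega
        rw [h0, mul_zero, mul_zero, mul_zero, mul_zero]
    rw [Finset.sum_congr rfl step1, ← Finset.mul_sum]
    congr 1
    rw [sum_reindex (term (2*N+1) ((N:ℕ):ℤ) fC)
        (-(((2*N+1+1):ℕ):ℤ)) ((((2*N+1+1):ℕ):ℤ)+2)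
        (-(((2*N+1+1):ℕ):ℤ)-1) ((((2*N+1+1):ℕ):ℤ)+1) 1 (-1)
        (Or.inr rfl) (fun k hk => by omega) (fun k hk => by omega)]
    have step2 : ∀ k ∈ Finset.Icc (-(((2*N+1+1):ℕ):ℤ)-1) ((((2*N+1+1):ℕ):ℤ)+1),
        term (2*N+1) ((N:ℕ):ℤ) fC (-1*k+1) = term (2*N+1) ((N:ℕ):ℤ) fA k := by
      intro k _
      rw [term, term, fA, fC]
      rw [show (2*(-1*k+1)^2 - 3*(-1*k+1) + 1 : ℤ) = 2*k^2 - k from by ring]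
      congr 1
      rw [show ((N:ℤ) + (-1*k+1)) = ((2*N+1:ℕ):ℤ) - ((N:ℤ)+k) from by push_cast; ring]
      exact (gbz_symm _ _).symm
    rw [Finset.sum_congr rfl step2]
    exact sum_renorm (2*N+1) fA ((N:ℕ):ℤ) _ _ _ _
      (by push_cast; omega) (by push_cast; omega) (by push_cast; omega) (by push_cast; omega)
  rw [hT1, hT2]
  ring

lemma SS_zero : SS 0 = 1 := by
  unfold SS
  rw [sum_renorm 0 fA (((0/2:ℕ)):ℤ) (-((0:ℕ):ℤ)-1) (((0:ℕ):ℤ)+1) 0 0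
    (by norm_num) (by norm_num) (by norm_num) (by norm_num)]
  rw [Finset.Icc_self, Finset.sum_singleton, term, fA]
  norm_num [gbz, gb_zero]

lemma SS_mul (m : ℕ) : SS m * QQ m = PP m := by
  induction m with
  | zero => rw [SS_zero, one_mul]; simp [QQ, PP]
  | succ m ih =>
      have hstep : SS (m+1) = (1 + Xq^(m+1)) * SS m := by
        rcases Nat.even_or_odd m with ⟨t, ht⟩ | ⟨t, ht⟩
        · have hm : m = 2*t := by omega
          subst hm
          exact step_even t
        · have hm : m = 2*t+1 := by omega
          subst hm
          exact step_odd t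
      rw [hstep, QQ_succ, PP_succ]
      have hx : Xq^(m+1) * Xq^(m+1) = Xq^(2*m+2) := by rw [← pow_add]; congr 1; omega
      linear_combination (1 - Xq^(m+1)) * (1 + Xq^(m+1)) * ih - PP m * hx

theorem stmt11 (N ν : ℕ) (hν : ν ≤ 1) :
    ∑ k ∈ Finset.Icc (-(N : ℤ)) ((N : ℤ) + ν),
      PowerSeries.X ^ (2 * k ^ 2 - k).toNat *
        ((∏ n ∈ Finset.range ((N : ℤ) + k).toNat,
            (1 - (PowerSeries.X : PowerSeries ℚ) ^ (2 * n + 2))) *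
         (∏ n ∈ Finset.range ((N : ℤ) - k + ν).toNat,
            (1 - PowerSeries.X ^ (2 * n + 2))))⁻¹ =
    (∏ n ∈ Finset.range (2 * N + ν), (1 - (PowerSeries.X : PowerSeries ℚ) ^ (n + 1)))⁻¹ := by
  have hM2 : (2*N+ν)/2 = N := by omega
  have key := SS_mul (2*N+ν)
  have hccP : constantCoeff (PP (2*N+ν)) ≠ 0 := by rw [cc_PP]; norm_num
  have step : ∀ k ∈ Finset.Icc (-(N : ℤ)) ((N : ℤ) + ν),
      PowerSeries.X ^ (2 * k ^ 2 - k).toNat *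
        ((∏ n ∈ Finset.range ((N : ℤ) + k).toNat,
            (1 - (PowerSeries.X : PowerSeries ℚ) ^ (2 * n + 2))) *
         (∏ n ∈ Finset.range ((N : ℤ) - k + ν).toNat,
            (1 - PowerSeries.X ^ (2 * n + 2))))⁻¹
      = term (2*N+ν) ((N:ℕ):ℤ) fA k * (PP (2*N+ν))⁻¹ := by
    intro k hk
    simp only [Finset.mem_Icc] at hk
    have ha : ((N:ℤ)+k).toNat ≤ 2*N+ν := by omega
    have hb : (2*N+ν) - ((N:ℤ)+k).toNat = ((N:ℤ)-k+ν).toNat := by omega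
    have hgm := gb_mul (2*N+ν) (((N:ℤ)+k).toNat) ha
    rw [hb] at hgm
    have hgbz : gbz (2*N+ν) ((N:ℤ)+k) = gb (2*N+ν) (((N:ℤ)+k).toNat) := by
      rw [gbz, if_pos (by omega)]
    have hinv : ((PP (((N:ℤ)+k).toNat)) * (PP (((N:ℤ)-k+ν).toNat)))⁻¹
        = gb (2*N+ν) (((N:ℤ)+k).toNat) * (PP (2*N+ν))⁻¹ := by
      rw [PowerSeries.inv_eq_iff_mul_eq_one (by rw [map_mul, cc_PP, cc_PP]; norm_num)]
      calc (gb (2*N+ν) (((N:ℤ)+k).toNat) * (PP (2*N+ν))⁻¹)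
            * (PP (((N:ℤ)+k).toNat) * PP (((N:ℤ)-k+ν).toNat))
          = (PP (2*N+ν))⁻¹ * (gb (2*N+ν) (((N:ℤ)+k).toNat)
              * (PP (((N:ℤ)+k).toNat) * PP (((N:ℤ)-k+ν).toNat))) := by ring
        _ = (PP (2*N+ν))⁻¹ * PP (2*N+ν) := by rw [hgm]
        _ = 1 := PowerSeries.inv_mul_cancel _ hccP
    show Xq ^ (2 * k ^ 2 - k).toNat *
        ((PP (((N:ℤ)+k).toNat)) * (PP (((N:ℤ)-k+ν).toNat)))⁻¹ = _
    rw [hinv, term, fA, hgbz]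
    ring
  rw [Finset.sum_congr rfl step, ← Finset.sum_mul]
  have hsum : ∑ k ∈ Finset.Icc (-(N : ℤ)) ((N : ℤ) + ν), term (2*N+ν) ((N:ℕ):ℤ) fA k
      = SS (2*N+ν) := by
    unfold SS
    rw [hM2]
    exact sum_renorm (2*N+ν) fA ((N:ℕ):ℤ) (-(N:ℤ)) ((N:ℤ)+ν)
      (-((2*N+ν:ℕ):ℤ)-1) (((2*N+ν:ℕ):ℤ)+1)
      le_rfl (by push_cast; omega) (by push_cast; omega) (by push_cast; omega)
  rw [hsum]
  show SS (2*N+ν) * (PP (2*N+ν))⁻¹ = (QQ (2*N+ν))⁻¹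
  rw [PowerSeries.eq_inv_iff_mul_eq_one (by rw [cc_QQ]; norm_num)]
  calc SS (2*N+ν) * (PP (2*N+ν))⁻¹ * QQ (2*N+ν)
      = (PP (2*N+ν))⁻¹ * (SS (2*N+ν) * QQ (2*N+ν)) := by ring
    _ = (PP (2*N+ν))⁻¹ * PP (2*N+ν) := by rw [key]
    _ = 1 := PowerSeries.inv_mul_cancel _ hccP
end

section
/- For nonnegative integers N, i, j and ν ∈ {0,1}: Σ_{l=0}^{N} [N choose l]_{q²} [l+ν choose i]_{q²} [N−l choose j]_{q²} q^{N−l−j} = (−q;q)_{N−i−j+ν} [N+ν choose i, j]_{q²} (1 − ν q^{N+i−j+1})/(1 − ν q^{2(N+1)}). -/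
namespace Aux
open Polynomial Finset

noncomputable def qh (k : ℕ) : Polynomial ℚ := ∑ t ∈ range k, Polynomial.X ^ t

noncomputable def qFact : ℕ → Polynomial ℚ
  | 0 => 1
  | n + 1 => qFact n * qh (n + 1)

lemma gauss_zero (m : ℕ) : gaussPoly m 0 = 1 := by cases m <;> rfl

lemma gauss_succ (m r : ℕ) :
    gaussPoly (m + 1) (r + 1) = gaussPoly m r + Polynomial.X ^ (r + 1) * gaussPoly m (r + 1) := rfl

lemma gauss_of_lt : ∀ {m r : ℕ}, m < r → gaussPoly m r = 0 := by
  intro m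
  induction m with
  | zero => intro r h; obtain ⟨s, rfl⟩ := Nat.exists_eq_succ_of_ne_zero (by omega : r ≠ 0); rfl
  | succ n ih =>
      intro r h
      obtain ⟨s, rfl⟩ := Nat.exists_eq_succ_of_ne_zero (by omega : r ≠ 0)
      rw [gauss_succ, ih (by omega), ih (by omega)]
      ring

lemma gauss_self : ∀ m : ℕ, gaussPoly m m = 1 := by
  intro m
  induction m with
  | zero => rfl
  | succ n ih => rw [gauss_succ, ih, gauss_of_lt (by omega)]; ring

lemma qh_succ (k : ℕ) : qh (k + 1) = qh k + Polynomial.X ^ k := by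
  simp [qh, Finset.sum_range_succ]

lemma qh_split (a b : ℕ) : qh (a + b) = qh a + Polynomial.X ^ a * qh b := by
  induction b with
  | zero => simp [qh]
  | succ n ih => rw [← Nat.add_assoc, qh_succ, ih, qh_succ]; ring

lemma qFact_succ (n : ℕ) : qFact (n + 1) = qFact n * qh (n + 1) := rfl

lemma qFact_mul : ∀ m r : ℕ, r ≤ m → gaussPoly m r * (qFact r * qFact (m - r)) = qFact m := by
  intro m
  induction m with
  | zero => intro r h; interval_cases r; simp [gauss_zero, qFact]
  | succ n ih =>
      intro r h
      match r with
      | 0 => simp [gauss_zero, qFact]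
      | s + 1 =>
        have hs : s ≤ n := by omega
        rw [gauss_succ]
        rcases Nat.eq_or_lt_of_le hs with rfl | hlt
        · rw [gauss_self, gauss_of_lt (by omega), Nat.succ_sub_succ, Nat.sub_self]
          simp [qFact]
        · have h1 : s + 1 ≤ n := hlt
          obtain ⟨d, hd⟩ : ∃ d, n - s = d + 1 := ⟨n - s - 1, by omega⟩
          have hd2 : n - (s + 1) = d := by omega
          have ihs := ih s hs
          have ihs1 := ih (s + 1) h1
          rw [hd] at ihs
          rw [hd2] at ihs1
          rw [Nat.succ_sub_succ, hd]
          rw [qFact_succ s, qFact_succ d]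
          have key : qh (s + 1) + Polynomial.X ^ (s + 1) * qh (d + 1) = qh (n + 1) := by
            have : (s + 1) + (d + 1) = n + 1 := by omega
            rw [← this]; exact (qh_split _ _).symm
          calc (gaussPoly n s + Polynomial.X ^ (s + 1) * gaussPoly n (s + 1)) *
                (qFact s * qh (s + 1) * (qFact d * qh (d + 1)))
              = (gaussPoly n s * (qFact s * (qFact d * qh (d+1)))) * qh (s+1)
                + Polynomial.X ^ (s+1) * (gaussPoly n (s+1) * (qFact s * qh (s+1) * qFact d)) * qh (d+1) := by ring
            _ = qFact n * qh (s + 1) + Polynomial.X ^ (s + 1) * qFact n * qh (d + 1) := by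
                rw [show qFact d * qh (d+1) = qFact (d+1) from rfl] at *
                rw [show (qFact s * qh (s+1) : Polynomial ℚ) = qFact (s+1) from rfl] at *
                rw [ihs, ihs1]
            _ = qFact n * (qh (s + 1) + Polynomial.X ^ (s + 1) * qh (d + 1)) := by ring
            _ = qFact (n + 1) := by rw [key, qFact_succ]

lemma qFact_eval_zero : ∀ n : ℕ, (qFact n).eval 0 = 1 := by
  intro n
  induction n with
  | zero => simp [qFact]
  | succ m ih =>
      rw [qFact_succ, Polynomial.eval_mul, ih, one_mul]
      simp only [qh, Polynomial.eval_finset_sum, Polynomial.eval_pow, Polynomial.eval_X]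
      rw [Finset.sum_eq_single 0]
      · norm_num
      · intro t _ ht; exact zero_pow ht
      · intro h; simp at h

lemma qFact_ne_zero (n : ℕ) : qFact n ≠ 0 := by
  intro h
  have := qFact_eval_zero n
  rw [h] at this; simp at this

lemma qh_mul_one_sub (a : ℕ) : qh a * (1 - Polynomial.X) = 1 - Polynomial.X ^ a := by
  induction a with
  | zero => simp [qh]
  | succ n ih => rw [qh_succ, add_mul, ih]; ring

-- addition-form product rule
lemma qFact_mul' (x y : ℕ) : gaussPoly (x + y) x * (qFact x * qFact y) = qFact (x + y) := by
  have := qFact_mul (x + y) x (by omega)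
  rwa [Nat.add_sub_cancel_left] at this

-- symmetry
lemma gauss_symm (x y : ℕ) : gaussPoly (x + y) x = gaussPoly (x + y) y := by
  have h1 := qFact_mul' x y
  have h2 := qFact_mul' y x
  rw [Nat.add_comm y x] at h2
  have hc : (qFact x * qFact y) ≠ 0 :=
    mul_ne_zero (qFact_ne_zero x) (qFact_ne_zero y)
  apply mul_right_cancel₀ hc
  rw [h1]; rw [← h2]; ring

-- trinomial, form 1: [x+y+z, x+y][x+y, x] = [x+y+z, x][y+z, y]
lemma trinom1 (x y z : ℕ) :
    gaussPoly (x + y + z) (x + y) * gaussPoly (x + y) x =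
    gaussPoly (x + y + z) x * gaussPoly (y + z) y := by
  have hc : qFact x * qFact y * qFact z ≠ 0 :=
    mul_ne_zero (mul_ne_zero (qFact_ne_zero x) (qFact_ne_zero y)) (qFact_ne_zero z)
  apply mul_right_cancel₀ hc
  have h1 : gaussPoly (x + y + z) (x + y) * (qFact (x + y) * qFact z) = qFact (x + y + z) :=
    qFact_mul' (x + y) z
  have h2 := qFact_mul' x y
  have h3 : gaussPoly (x + y + z) x * (qFact x * qFact (y + z)) = qFact (x + y + z) := by
    have := qFact_mul' x (y + z); rwa [← Nat.add_assoc] at this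
  have h4 := qFact_mul' y z
  calc gaussPoly (x + y + z) (x + y) * gaussPoly (x + y) x * (qFact x * qFact y * qFact z)
      = gaussPoly (x + y + z) (x + y) * (gaussPoly (x + y) x * (qFact x * qFact y)) * qFact z := by
        ring
    _ = gaussPoly (x + y + z) (x + y) * (qFact (x + y) * qFact z) := by rw [h2]; ring
    _ = qFact (x + y + z) := h1
    _ = gaussPoly (x + y + z) x * (qFact x * qFact (y + z)) := h3.symm
    _ = gaussPoly (x + y + z) x * (qFact x * (gaussPoly (y + z) y * (qFact y * qFact z))) := by
        rw [h4]
    _ = gaussPoly (x + y + z) x * gaussPoly (y + z) y * (qFact x * qFact y * qFact z) := by ring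

-- I1 : [j+d, j](1 - X^{j+d+1}) = [j+d+1, j](1 - X^{d+1})
lemma I1 (jj d : ℕ) :
    gaussPoly (jj + d) jj * (1 - Polynomial.X ^ (jj + d + 1)) =
    gaussPoly (jj + d + 1) jj * (1 - Polynomial.X ^ (d + 1)) := by
  have hc : qFact jj * qFact d ≠ 0 := mul_ne_zero (qFact_ne_zero jj) (qFact_ne_zero d)
  -- qh version first
  have hq : gaussPoly (jj + d) jj * qh (jj + d + 1) = gaussPoly (jj + d + 1) jj * qh (d + 1) := by
    apply mul_right_cancel₀ hc
    have h1 := qFact_mul' jj d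
    have h2 : gaussPoly (jj + d + 1) jj * (qFact jj * qFact (d + 1)) = qFact (jj + d + 1) := by
      have := qFact_mul' jj (d + 1); rwa [← Nat.add_assoc] at this
    calc gaussPoly (jj + d) jj * qh (jj + d + 1) * (qFact jj * qFact d)
        = gaussPoly (jj + d) jj * (qFact jj * qFact d) * qh (jj + d + 1) := by ring
      _ = qFact (jj + d) * qh (jj + d + 1) := by rw [h1]
      _ = qFact (jj + d + 1) := (qFact_succ _).symm
      _ = gaussPoly (jj + d + 1) jj * (qFact jj * qFact (d + 1)) := h2.symm
      _ = gaussPoly (jj + d + 1) jj * (qFact jj * (qFact d * qh (d + 1))) := by rw [qFact_succ]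
      _ = gaussPoly (jj + d + 1) jj * qh (d + 1) * (qFact jj * qFact d) := by ring
  have e1 := qh_mul_one_sub (jj + d + 1)
  have e2 := qh_mul_one_sub (d + 1)
  calc gaussPoly (jj + d) jj * (1 - Polynomial.X ^ (jj + d + 1))
      = gaussPoly (jj + d) jj * (qh (jj + d + 1) * (1 - Polynomial.X)) := by rw [e1]
    _ = (gaussPoly (jj + d) jj * qh (jj + d + 1)) * (1 - Polynomial.X) := by ring
    _ = (gaussPoly (jj + d + 1) jj * qh (d + 1)) * (1 - Polynomial.X) := by rw [hq]
    _ = gaussPoly (jj + d + 1) jj * (qh (d + 1) * (1 - Polynomial.X)) := by ring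
    _ = gaussPoly (jj + d + 1) jj * (1 - Polynomial.X ^ (d + 1)) := by rw [e2]

-- I2 : [a+j, a](1 - X^{a+j+1}) = [a+j+1, a+1](1 - X^{a+1})
lemma I2 (a jj : ℕ) :
    gaussPoly (a + jj) a * (1 - Polynomial.X ^ (a + jj + 1)) =
    gaussPoly (a + jj + 1) (a + 1) * (1 - Polynomial.X ^ (a + 1)) := by
  have h1 : gaussPoly (a + jj) a = gaussPoly (jj + a) jj := by
    rw [Nat.add_comm a jj]; exact (gauss_symm jj a).symm
  have h2 : gaussPoly (a + jj + 1) (a + 1) = gaussPoly (jj + (a + 1)) jj := by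
    rw [show a + jj + 1 = a + 1 + jj by omega]
    rw [gauss_symm (a+1) jj, Nat.add_comm (a+1) jj]
  rw [h1, h2, show a + jj + 1 = jj + a + 1 by omega]
  exact I1 jj a

noncomputable def Gp (m r : ℕ) : PowerSeries ℚ :=
  Polynomial.aeval ((PowerSeries.X : PowerSeries ℚ) ^ 2) (gaussPoly m r)

noncomputable def Fp (n : ℕ) : PowerSeries ℚ :=
  Polynomial.aeval ((PowerSeries.X : PowerSeries ℚ) ^ 2) (qFact n)

noncomputable def Hp (n : ℕ) : PowerSeries ℚ :=
  Polynomial.aeval ((PowerSeries.X : PowerSeries ℚ) ^ 2) (qh n)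

lemma aeval_one_sub_pow (a : ℕ) :
    Polynomial.aeval ((PowerSeries.X : PowerSeries ℚ) ^ 2) ((1 : Polynomial ℚ) - Polynomial.X ^ a) =
      1 - (PowerSeries.X : PowerSeries ℚ) ^ (2 * a) := by
  rw [map_sub, map_one, map_pow, Polynomial.aeval_X, ← pow_mul, Nat.mul_comm]

lemma Gp_zero (m : ℕ) : Gp m 0 = 1 := by rw [Gp, gauss_zero, map_one]

lemma Gp_of_lt {m r : ℕ} (h : m < r) : Gp m r = 0 := by rw [Gp, gauss_of_lt h, map_zero]

lemma Gp_self (m : ℕ) : Gp m m = 1 := by rw [Gp, gauss_self, map_one]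

lemma Gp_succ (m r : ℕ) :
    Gp (m + 1) (r + 1) = Gp m r + (PowerSeries.X : PowerSeries ℚ) ^ (2 * (r + 1)) * Gp m (r + 1) := by
  rw [Gp, gauss_succ, map_add, map_mul, map_pow, Polynomial.aeval_X, ← pow_mul, Nat.mul_comm]
  rfl

lemma Gp_symm (x y : ℕ) : Gp (x + y) x = Gp (x + y) y := by rw [Gp, gauss_symm x y]; rfl

lemma GpF (x y : ℕ) : Gp (x + y) x * (Fp x * Fp y) = Fp (x + y) := by
  rw [Gp, Fp, Fp, Fp, ← map_mul, ← map_mul, ← qFact_mul' x y]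

lemma Gp_tri1 (x y z : ℕ) :
    Gp (x + y + z) (x + y) * Gp (x + y) x = Gp (x + y + z) x * Gp (y + z) y := by
  simp only [Gp, ← map_mul]
  rw [trinom1 x y z]

lemma Fp_succ (n : ℕ) : Fp (n + 1) = Fp n * Hp (n + 1) := by
  rw [Fp, Fp, Hp, ← map_mul, qFact_succ]

lemma Fp_ne_zero (n : ℕ) : Fp n ≠ 0 := by
  intro h
  have h2 : PowerSeries.constantCoeff (Fp n) = (qFact n).eval 0 := by
    rw [Fp]
    induction (qFact n) using Polynomial.induction_on' with
    | add p q hp hq => rw [map_add, map_add, Polynomial.eval_add, hp, hq]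
    | monomial k a =>
        rw [Polynomial.aeval_monomial, map_mul, map_pow, map_pow,
          PowerSeries.constantCoeff_X]
        have : (PowerSeries.constantCoeff (R := ℚ)) ((algebraMap ℚ (PowerSeries ℚ)) a) = a := by
          simp [PowerSeries.algebraMap_apply]
        rw [this, Polynomial.eval_monomial]
        cases k with
        | zero => norm_num
        | succ kk => norm_num
  rw [h, map_zero, qFact_eval_zero] at h2
  exact one_ne_zero h2.symm

lemma Hp_mul (a : ℕ) :
    Hp a * (1 - (PowerSeries.X : PowerSeries ℚ) ^ 2) = 1 - (PowerSeries.X : PowerSeries ℚ) ^ (2 * a) := by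
  have := qh_mul_one_sub a
  have h2 := congrArg (Polynomial.aeval ((PowerSeries.X : PowerSeries ℚ) ^ 2)) this
  rw [map_mul, map_sub, map_one, Polynomial.aeval_X, aeval_one_sub_pow] at h2
  rw [Hp, h2]

lemma one_sub_X_sq_ne : (1 - (PowerSeries.X : PowerSeries ℚ) ^ 2) ≠ 0 := by
  intro h
  have := congrArg (PowerSeries.constantCoeff (R := ℚ)) h
  simp [map_sub, map_pow, PowerSeries.constantCoeff_X] at this

lemma GI1 (jj d : ℕ) :
    Gp (jj + d) jj * (1 - (PowerSeries.X : PowerSeries ℚ) ^ (2 * (jj + d + 1))) =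
    Gp (jj + d + 1) jj * (1 - (PowerSeries.X : PowerSeries ℚ) ^ (2 * (d + 1))) := by
  have h2 := congrArg (Polynomial.aeval ((PowerSeries.X : PowerSeries ℚ) ^ 2)) (I1 jj d)
  rw [map_mul, map_mul, aeval_one_sub_pow, aeval_one_sub_pow] at h2
  exact h2

lemma GI2 (a jj : ℕ) :
    Gp (a + jj) a * (1 - (PowerSeries.X : PowerSeries ℚ) ^ (2 * (a + jj + 1))) =
    Gp (a + jj + 1) (a + 1) * (1 - (PowerSeries.X : PowerSeries ℚ) ^ (2 * (a + 1))) := by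
  have h2 := congrArg (Polynomial.aeval ((PowerSeries.X : PowerSeries ℚ) ^ 2)) (I2 a jj)
  rw [map_mul, map_mul, aeval_one_sub_pow, aeval_one_sub_pow] at h2
  exact h2

lemma Gp_tri2 (m jj z : ℕ) :
    Gp (m + jj + z) m * Gp (jj + z) jj = Gp (m + jj + z) jj * Gp (m + z) m := by
  have h1 := Gp_tri1 m jj z
  have h2 := Gp_tri1 jj m z
  rw [show jj + m + z = m + jj + z by omega, show jj + m = m + jj by omega] at h2
  rw [Gp_symm m jj] at h1
  exact h1.symm.trans h2

lemma Gp_tri1_sub {Nn l i : ℕ} (h1 : i ≤ l) (h2 : l ≤ Nn) :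
    Gp Nn l * Gp l i = Gp Nn i * Gp (Nn - i) (l - i) := by
  obtain ⟨y, hy⟩ : ∃ y, l = i + y := ⟨l - i, by omega⟩
  subst hy
  obtain ⟨z, hz⟩ : ∃ z, Nn = i + y + z := ⟨Nn - (i + y), by omega⟩
  subst hz
  rw [show i + y + z - i = y + z by omega, show i + y - i = y by omega]
  exact Gp_tri1 i y z

lemma Gp_tri2_sub {A m jj : ℕ} (h : m + jj ≤ A) :
    Gp A m * Gp (A - m) jj = Gp A jj * Gp (A - jj) m := by
  obtain ⟨z, hz⟩ : ∃ z, A = m + jj + z := ⟨A - m - jj, by omega⟩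
  subst hz
  rw [show m + jj + z - m = jj + z by omega, show m + jj + z - jj = m + z by omega]
  exact Gp_tri2 m jj z

lemma GpF_sub {m r : ℕ} (h : r ≤ m) : Gp m r * (Fp r * Fp (m - r)) = Fp m := by
  obtain ⟨y, hy⟩ : ∃ y, m = r + y := ⟨m - r, by omega⟩
  subst hy
  rw [show r + y - r = y by omega]
  exact GpF r y

lemma shift_sum {M : Type*} [AddCommGroup M] (f : ℕ → M) (n : ℕ) :
    ∑ m ∈ Finset.range (n + 1), f (m + 1)
      = (∑ m ∈ Finset.range (n + 1), f m) + f (n + 1) - f 0 := by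
  have h1 := Finset.sum_range_succ' f (n + 1)
  have h2 := Finset.sum_range_succ f (n + 1)
  rw [h2] at h1
  rw [eq_sub_iff_add_eq]
  exact h1.symm

lemma sumE (K : ℕ) :
    (∑ m ∈ Finset.range (K + 1), Gp K m * (PowerSeries.X : PowerSeries ℚ) ^ (K - m)) =
    ∏ n ∈ Finset.range K, (1 + (PowerSeries.X : PowerSeries ℚ) ^ (n + 1)) := by
  induction K with
  | zero => simp [Gp_zero]
  | succ K IH =>
    have sym : (∑ m ∈ Finset.range (K + 1), Gp K m * (PowerSeries.X : PowerSeries ℚ) ^ m)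
        = ∑ m ∈ Finset.range (K + 1), Gp K m * (PowerSeries.X : PowerSeries ℚ) ^ (K - m) := by
      rw [← Finset.sum_range_reflect
        (fun m => Gp K m * (PowerSeries.X : PowerSeries ℚ) ^ (K - m)) (K + 1)]
      apply Finset.sum_congr rfl
      intro m hm
      rw [Finset.mem_range] at hm
      rw [show K + 1 - 1 - m = K - m by omega, show K - (K - m) = m by omega]
      congr 1
      have h := Gp_symm m (K - m)
      rw [show m + (K - m) = K by omega] at h
      exact h
    have split : ∀ m ∈ Finset.range (K + 1),
        Gp (K + 1) (m + 1) * (PowerSeries.X : PowerSeries ℚ) ^ (K + 1 - (m + 1)) =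
        Gp K m * (PowerSeries.X : PowerSeries ℚ) ^ (K - m)
          + Gp K (m + 1) * (PowerSeries.X : PowerSeries ℚ) ^ (K + 1 + (m + 1)) := by
      intro m hm
      rw [Finset.mem_range] at hm
      rw [show K + 1 - (m + 1) = K - m by omega, Gp_succ K m, add_mul]
      congr 1
      calc (PowerSeries.X : PowerSeries ℚ) ^ (2 * (m + 1)) * Gp K (m + 1)
            * (PowerSeries.X : PowerSeries ℚ) ^ (K - m)
          = Gp K (m + 1) * ((PowerSeries.X : PowerSeries ℚ) ^ (2 * (m + 1))
            * (PowerSeries.X : PowerSeries ℚ) ^ (K - m)) := by ring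
        _ = Gp K (m + 1) * (PowerSeries.X : PowerSeries ℚ) ^ (K + 1 + (m + 1)) := by
            rw [← pow_add, show 2 * (m + 1) + (K - m) = K + 1 + (m + 1) by omega]
    have step1 : (∑ m ∈ Finset.range (K + 1 + 1),
          Gp (K + 1) m * (PowerSeries.X : PowerSeries ℚ) ^ (K + 1 - m))
        = (∑ m ∈ Finset.range (K + 1), Gp K m * (PowerSeries.X : PowerSeries ℚ) ^ (K - m))
          + (∑ m ∈ Finset.range (K + 1),
              Gp K (m + 1) * (PowerSeries.X : PowerSeries ℚ) ^ (K + 1 + (m + 1)))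
          + (PowerSeries.X : PowerSeries ℚ) ^ (K + 1) := by
      rw [Finset.sum_range_succ'
        (fun m => Gp (K + 1) m * (PowerSeries.X : PowerSeries ℚ) ^ (K + 1 - m)) (K + 1)]
      rw [Finset.sum_congr rfl split, Finset.sum_add_distrib, Gp_zero]
      rw [show K + 1 - 0 = K + 1 by omega]
      ring
    have shift : (∑ m ∈ Finset.range (K + 1),
          Gp K (m + 1) * (PowerSeries.X : PowerSeries ℚ) ^ (K + 1 + (m + 1)))
        = (∑ m ∈ Finset.range (K + 1), Gp K m * (PowerSeries.X : PowerSeries ℚ) ^ (K + 1 + m))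
          + Gp K (K + 1) * (PowerSeries.X : PowerSeries ℚ) ^ (K + 1 + (K + 1))
          - Gp K 0 * (PowerSeries.X : PowerSeries ℚ) ^ (K + 1 + 0) :=
      shift_sum (fun t => Gp K t * (PowerSeries.X : PowerSeries ℚ) ^ (K + 1 + t)) K
    have gsum : (∑ m ∈ Finset.range (K + 1),
          Gp K m * (PowerSeries.X : PowerSeries ℚ) ^ (K + 1 + m))
        = (PowerSeries.X : PowerSeries ℚ) ^ (K + 1)
          * ∑ m ∈ Finset.range (K + 1), Gp K m * (PowerSeries.X : PowerSeries ℚ) ^ m := by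
      rw [Finset.mul_sum]
      apply Finset.sum_congr rfl
      intro m _
      rw [pow_add]
      ring
    rw [step1, shift, gsum, sym, IH, Gp_of_lt (by omega : K < K + 1), Gp_zero,
      Finset.prod_range_succ]
    ring

lemma P0 (N i j : ℕ) :
    (∑ l ∈ Finset.range (N + 1),
      Gp N l * Gp l i * Gp (N - l) j * (PowerSeries.X : PowerSeries ℚ) ^ (N - l - j)) =
    (∏ n ∈ Finset.range (N - i - j), (1 + (PowerSeries.X : PowerSeries ℚ) ^ (n + 1)))
      * (Gp N i * Gp (N - i) j) := by
  by_cases hij : i + j ≤ N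
  · have hsub : Finset.Ico i (N - j + 1) ⊆ Finset.range (N + 1) := by
      intro l hl; rw [Finset.mem_Ico] at hl; rw [Finset.mem_range]; omega
    have hz : ∀ l ∈ Finset.range (N + 1), l ∉ Finset.Ico i (N - j + 1) →
        Gp N l * Gp l i * Gp (N - l) j * (PowerSeries.X : PowerSeries ℚ) ^ (N - l - j) = 0 := by
      intro l hl hnl
      rw [Finset.mem_range] at hl
      rw [Finset.mem_Ico] at hnl
      push_neg at hnl
      by_cases hli : l < i
      · rw [Gp_of_lt hli]; ring
      · have : N - j + 1 ≤ l := hnl (by omega)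
        rw [Gp_of_lt (show N - l < j by omega)]; ring
    rw [← Finset.sum_subset hsub hz]
    rw [Finset.sum_Ico_eq_sum_range]
    rw [show N - j + 1 - i = (N - i - j) + 1 by omega]
    have congr1 : ∀ m ∈ Finset.range ((N - i - j) + 1),
        Gp N (i + m) * Gp (i + m) i * Gp (N - (i + m)) j
          * (PowerSeries.X : PowerSeries ℚ) ^ (N - (i + m) - j)
        = (Gp N i * Gp (N - i) j)
          * (Gp (N - i - j) m * (PowerSeries.X : PowerSeries ℚ) ^ (N - i - j - m)) := by
      intro m hm
      rw [Finset.mem_range] at hm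
      have e1 : Gp N (i + m) * Gp (i + m) i = Gp N i * Gp (N - i) m := by
        have := Gp_tri1_sub (show i ≤ i + m by omega) (show i + m ≤ N by omega)
        rwa [show i + m - i = m by omega] at this
      have e2 : Gp (N - i) m * Gp (N - i - m) j = Gp (N - i) j * Gp (N - i - j) m :=
        Gp_tri2_sub (show m + j ≤ N - i by omega)
      rw [show N - (i + m) = N - i - m by omega,
        show N - i - m - j = N - i - j - m by omega]
      linear_combination (Gp (N - i - m) j * (PowerSeries.X : PowerSeries ℚ) ^ (N - i - j - m)) * e1
        + (Gp N i * (PowerSeries.X : PowerSeries ℚ) ^ (N - i - j - m)) * e2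
    rw [Finset.sum_congr rfl congr1, ← Finset.mul_sum, sumE (N - i - j)]
    ring
  · have hzero : Gp N i * Gp (N - i) j = 0 := by
      by_cases hi : i ≤ N
      · rw [Gp_of_lt (show N - i < j by omega)]; ring
      · rw [Gp_of_lt (show N < i by omega)]; ring
    rw [hzero, mul_zero]
    apply Finset.sum_eq_zero
    intro l hl
    rw [Finset.mem_range] at hl
    by_cases hli : l < i
    · rw [Gp_of_lt hli]; ring
    · rw [Gp_of_lt (show N - l < j by omega)]; ring

lemma C2 (a jj k : ℕ) :
    ((1 + (PowerSeries.X : PowerSeries ℚ) ^ (k + 1)) * Gp (a + 1 + jj + k) a * Gp (jj + k + 1) jj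
        + (PowerSeries.X : PowerSeries ℚ) ^ (2 * (a + 1)) * Gp (a + 1 + jj + k) (a + 1)
          * Gp (jj + k) jj)
      * (1 - (PowerSeries.X : PowerSeries ℚ) ^ (2 * (a + jj + k + 2)))
    = (1 + (PowerSeries.X : PowerSeries ℚ) ^ (k + 1)) * Gp (a + jj + k + 2) (a + 1)
        * Gp (jj + k + 1) jj * (1 - (PowerSeries.X : PowerSeries ℚ) ^ (2 * a + k + 3)) := by
  set X : PowerSeries ℚ := PowerSeries.X with hX
  have hc : Fp (a + 1) * Fp jj * Fp (k + 1) * (1 - X ^ 2) ≠ 0 :=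
    mul_ne_zero (mul_ne_zero (mul_ne_zero (Fp_ne_zero _) (Fp_ne_zero _)) (Fp_ne_zero _))
      one_sub_X_sq_ne
  apply mul_right_cancel₀ hc
  have r1 : Gp (a + 1 + jj + k) a * (Fp a * Fp (jj + k + 1)) = Fp (a + 1 + jj + k) := by
    have := GpF a (jj + k + 1); rwa [show a + (jj + k + 1) = a + 1 + jj + k by omega] at this
  have r2 : Gp (jj + k + 1) jj * (Fp jj * Fp (k + 1)) = Fp (jj + k + 1) := by
    have := GpF jj (k + 1); rwa [show jj + (k + 1) = jj + k + 1 by omega] at this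
  have r3 : Gp (a + 1 + jj + k) (a + 1) * (Fp (a + 1) * Fp (jj + k)) = Fp (a + 1 + jj + k) := by
    have := GpF (a + 1) (jj + k); rwa [show a + 1 + (jj + k) = a + 1 + jj + k by omega] at this
  have r4 : Gp (jj + k) jj * (Fp jj * Fp k) = Fp (jj + k) := GpF jj k
  have r5 : Gp (a + jj + k + 2) (a + 1) * (Fp (a + 1) * Fp (jj + k + 1)) = Fp (a + jj + k + 2) := by
    have := GpF (a + 1) (jj + k + 1)
    rwa [show a + 1 + (jj + k + 1) = a + jj + k + 2 by omega] at this
  have f1 : Fp (a + 1) = Fp a * Hp (a + 1) := Fp_succ a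
  have f2 : Fp (k + 1) = Fp k * Hp (k + 1) := Fp_succ k
  have f3 : Fp (a + jj + k + 2) = Fp (a + 1 + jj + k) * Hp (a + jj + k + 2) := by
    have := Fp_succ (a + 1 + jj + k)
    rwa [show a + 1 + jj + k + 1 = a + jj + k + 2 by omega] at this
  have h1 : Hp (a + 1) * (1 - X ^ 2) = 1 - X ^ (2 * (a + 1)) := Hp_mul (a + 1)
  have h2 : Hp (k + 1) * (1 - X ^ 2) = 1 - X ^ (2 * (k + 1)) := Hp_mul (k + 1)
  have h3 : Hp (a + jj + k + 2) * (1 - X ^ 2) = 1 - X ^ (2 * (a + jj + k + 2)) :=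
    Hp_mul (a + jj + k + 2)
  set P := X ^ (k + 1) with hP
  set Q := X ^ (2 * (a + 1)) with hQ
  set D := (1 : PowerSeries ℚ) - X ^ (2 * (a + jj + k + 2)) with hD
  set E := (1 : PowerSeries ℚ) - X ^ (2 * a + k + 3) with hE
  have t1 : (1 + P) * Gp (a + 1 + jj + k) a * Gp (jj + k + 1) jj * D
        * (Fp (a + 1) * Fp jj * Fp (k + 1) * (1 - X ^ 2))
      = (1 + P) * D * Fp (a + 1 + jj + k) * (1 - X ^ (2 * (a + 1))) := by
    linear_combination
      ((1 + P) * D * Gp (a + 1 + jj + k) a * Fp (a + 1) * (1 - X ^ 2)) * r2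
      + ((1 + P) * D * Gp (a + 1 + jj + k) a * (1 - X ^ 2) * Fp (jj + k + 1)) * f1
      + ((1 + P) * D * Hp (a + 1) * (1 - X ^ 2)) * r1
      + ((1 + P) * D * Fp (a + 1 + jj + k)) * h1
  have t2 : Q * Gp (a + 1 + jj + k) (a + 1) * Gp (jj + k) jj * D
        * (Fp (a + 1) * Fp jj * Fp (k + 1) * (1 - X ^ 2))
      = Q * D * Fp (a + 1 + jj + k) * (1 - X ^ (2 * (k + 1))) := by
    linear_combination
      (Q * D * Gp (a + 1 + jj + k) (a + 1) * Gp (jj + k) jj * Fp (a + 1) * Fp jj * (1 - X ^ 2)) * f2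
      + (Q * D * Gp (a + 1 + jj + k) (a + 1) * Fp (a + 1) * Hp (k + 1) * (1 - X ^ 2)) * r4
      + (Q * D * Hp (k + 1) * (1 - X ^ 2)) * r3
      + (Q * D * Fp (a + 1 + jj + k)) * h2
  have t3 : (1 + P) * Gp (a + jj + k + 2) (a + 1) * Gp (jj + k + 1) jj * E
        * (Fp (a + 1) * Fp jj * Fp (k + 1) * (1 - X ^ 2))
      = (1 + P) * E * Fp (a + 1 + jj + k) * D := by
    linear_combination
      ((1 + P) * E * Gp (a + jj + k + 2) (a + 1) * Fp (a + 1) * (1 - X ^ 2)) * r2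
      + ((1 + P) * E * (1 - X ^ 2)) * r5
      + ((1 + P) * E * (1 - X ^ 2)) * f3
      + ((1 + P) * E * Fp (a + 1 + jj + k)) * h3
  linear_combination t1 + t2 - t3

lemma P1 (N i j : ℕ) :
    (∑ l ∈ Finset.range (N + 1),
        Gp N l * Gp (l + 1) i * Gp (N - l) j * (PowerSeries.X : PowerSeries ℚ) ^ (N - l - j))
      * (1 - (PowerSeries.X : PowerSeries ℚ) ^ (2 * (N + 1)))
    = (∏ n ∈ Finset.range (N + 1 - i - j), (1 + (PowerSeries.X : PowerSeries ℚ) ^ (n + 1)))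
      * (Gp (N + 1) i * Gp (N + 1 - i) j)
      * (1 - (PowerSeries.X : PowerSeries ℚ) ^ (N + i + 1 - j)) := by
  by_cases hij : i + j ≤ N + 1
  · rcases Nat.eq_zero_or_pos i with rfl | hi
    · -- i = 0
      have hsum : ∀ l ∈ Finset.range (N + 1),
          Gp N l * Gp (l + 1) 0 * Gp (N - l) j * (PowerSeries.X : PowerSeries ℚ) ^ (N - l - j)
          = Gp N l * Gp l 0 * Gp (N - l) j * (PowerSeries.X : PowerSeries ℚ) ^ (N - l - j) := by
        intro l _; rw [Gp_zero, Gp_zero]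
      rw [Finset.sum_congr rfl hsum, P0 N 0 j]
      simp only [Nat.sub_zero, Nat.add_zero]
      rcases Nat.lt_or_ge j (N + 1) with hj | hj
      · -- j ≤ N
        have GI1' : Gp N j * (1 - (PowerSeries.X : PowerSeries ℚ) ^ (2 * (N + 1)))
            = Gp (N + 1) j * (1 - (PowerSeries.X : PowerSeries ℚ) ^ (2 * (N - j + 1))) := by
          have := GI1 j (N - j)
          rwa [show j + (N - j) = N by omega, show N + 1 = N + 1 from rfl] at this
        rw [show N + 1 - j = (N - j) + 1 by omega, Finset.prod_range_succ, Gp_zero N,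
          Gp_zero (N + 1)]
        linear_combination
          ((∏ n ∈ Finset.range (N - j), (1 + (PowerSeries.X : PowerSeries ℚ) ^ (n + 1)))) * GI1'
      · -- j = N + 1
        have hj' : j = N + 1 := by omega
        subst hj'
        rw [Gp_of_lt (show N < N + 1 by omega), show N + 0 + 1 - (N + 1) = 0 by omega, pow_zero]
        ring
    · -- i ≥ 1
      obtain ⟨a, rfl⟩ : ∃ a, i = a + 1 := ⟨i - 1, by omega⟩
      have hsplit : ∀ l ∈ Finset.range (N + 1),
          Gp N l * Gp (l + 1) (a + 1) * Gp (N - l) j * (PowerSeries.X : PowerSeries ℚ) ^ (N - l - j)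
          = Gp N l * Gp l a * Gp (N - l) j * (PowerSeries.X : PowerSeries ℚ) ^ (N - l - j)
            + (PowerSeries.X : PowerSeries ℚ) ^ (2 * (a + 1))
              * (Gp N l * Gp l (a + 1) * Gp (N - l) j
                * (PowerSeries.X : PowerSeries ℚ) ^ (N - l - j)) := by
        intro l _; rw [Gp_succ l a]; ring
      rw [Finset.sum_congr rfl hsplit, Finset.sum_add_distrib, ← Finset.mul_sum,
        P0 N a j, P0 N (a + 1) j]
      rcases Nat.lt_or_ge (a + j) N with hk | hk
      · -- K0 ≥ 1
        obtain ⟨k, rfl⟩ : ∃ k, N = a + j + k + 1 := ⟨N - a - j - 1, by omega⟩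
        rw [show a + j + k + 1 - a - j = k + 1 by omega,
          show a + j + k + 1 - (a + 1) - j = k by omega,
          show a + j + k + 1 + 1 - (a + 1) - j = k + 1 by omega,
          show a + j + k + 1 - a = j + k + 1 by omega,
          show a + j + k + 1 - (a + 1) = j + k by omega,
          show a + j + k + 1 + 1 - (a + 1) = j + k + 1 by omega,
          show a + j + k + 1 + (a + 1) + 1 - j = 2 * a + k + 3 by omega,
          show a + j + k + 1 + 1 = a + j + k + 2 by omega]
        rw [show a + j + k + 1 = a + 1 + j + k by omega]
        simp only [Finset.prod_range_succ]
        linear_combination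
          (∏ n ∈ Finset.range k, (1 + (PowerSeries.X : PowerSeries ℚ) ^ (n + 1))) * C2 a j k
      · -- K0 = 0 : a + j = N
        have haj : a + j = N := by omega
        rw [show N - a - j = 0 by omega, show N - (a + 1) - j = 0 by omega,
          show N + 1 - (a + 1) - j = 0 by omega,
          show N + 1 - (a + 1) = j by omega,
          show N + (a + 1) + 1 - j = 2 * (a + 1) by omega]
        simp only [Finset.range_zero, Finset.prod_empty]
        have hzero : Gp N (a + 1) * Gp (N - (a + 1)) j = 0 := by
          rcases Nat.lt_or_ge a N with h1 | h1
          · rw [Gp_of_lt (show N - (a + 1) < j by omega)]; ring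
          · rw [Gp_of_lt (show N < a + 1 by omega)]; ring
        have hNa : N - a = j := by omega
        rw [hNa, Gp_self, hzero]
        have GI2' : Gp N a * (1 - (PowerSeries.X : PowerSeries ℚ) ^ (2 * (N + 1)))
            = Gp (N + 1) (a + 1) * (1 - (PowerSeries.X : PowerSeries ℚ) ^ (2 * (a + 1))) := by
          have := GI2 a j
          rwa [haj] at this
        linear_combination GI2'
  · -- i + j > N + 1 : both sides vanish
    have hR : Gp (N + 1) i * Gp (N + 1 - i) j = 0 := by
      rcases Nat.lt_or_ge (N + 1) i with h1 | h1
      · rw [Gp_of_lt h1]; ring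
      · rw [Gp_of_lt (show N + 1 - i < j by omega)]; ring
    have hL : (∑ l ∈ Finset.range (N + 1),
        Gp N l * Gp (l + 1) i * Gp (N - l) j
          * (PowerSeries.X : PowerSeries ℚ) ^ (N - l - j)) = 0 := by
      apply Finset.sum_eq_zero
      intro l hl
      rw [Finset.mem_range] at hl
      rcases Nat.lt_or_ge (l + 1) i with h1 | h1
      · rw [Gp_of_lt h1]; ring
      · rw [Gp_of_lt (show N - l < j by omega)]; ring
    rw [hL, hR]; ring
end Aux

theorem stmt12 (N i j ν : ℕ) (hν : ν ≤ 1) :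
    ∑ l ∈ Finset.range (N + 1),
      Polynomial.aeval (PowerSeries.X ^ 2 : PowerSeries ℚ)
        (gaussPoly N l * gaussPoly (l + ν) i * gaussPoly (N - l) j) *
      PowerSeries.X ^ (N - l - j) =
    (∏ n ∈ Finset.range (N + ν - i - j), (1 + PowerSeries.X ^ (n + 1))) *
      Polynomial.aeval (PowerSeries.X ^ 2 : PowerSeries ℚ)
        (gaussPoly (N + ν) i * gaussPoly (N + ν - i) j) *
      (1 - (ν : PowerSeries ℚ) * PowerSeries.X ^ (N + i + 1 - j)) *
      (1 - (ν : PowerSeries ℚ) * PowerSeries.X ^ (2 * (N + 1)))⁻¹ := by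
  interval_cases ν
  · -- ν = 0
    have hinv : (1 : PowerSeries ℚ)⁻¹ = 1 := by
      have := PowerSeries.mul_inv_cancel (k := ℚ) 1 (by simp)
      simp only [one_mul] at this; exact this
    simp only [Nat.cast_zero, zero_mul, sub_zero, Nat.add_zero, hinv, mul_one, map_mul]
    exact Aux.P0 N i j
  · -- ν = 1
    simp only [Nat.cast_one, one_mul, map_mul]
    have hB : PowerSeries.constantCoeff
        (1 - (PowerSeries.X : PowerSeries ℚ) ^ (2 * (N + 1))) ≠ 0 := by
      rw [map_sub, map_one, map_pow, PowerSeries.constantCoeff_X, zero_pow (by omega : 2 * (N + 1) ≠ 0)]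
      norm_num
    have hBB : (1 - (PowerSeries.X : PowerSeries ℚ) ^ (2 * (N + 1)))
        * (1 - (PowerSeries.X : PowerSeries ℚ) ^ (2 * (N + 1)))⁻¹ = 1 :=
      PowerSeries.mul_inv_cancel _ hB
    have key : (∑ l ∈ Finset.range (N + 1),
          Aux.Gp N l * Aux.Gp (l + 1) i * Aux.Gp (N - l) j
            * (PowerSeries.X : PowerSeries ℚ) ^ (N - l - j))
        * (1 - (PowerSeries.X : PowerSeries ℚ) ^ (2 * (N + 1)))
        = (∏ n ∈ Finset.range (N + 1 - i - j), (1 + (PowerSeries.X : PowerSeries ℚ) ^ (n + 1)))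
          * (Aux.Gp (N + 1) i * Aux.Gp (N + 1 - i) j)
          * (1 - (PowerSeries.X : PowerSeries ℚ) ^ (N + i + 1 - j)) := Aux.P1 N i j
    calc (∑ l ∈ Finset.range (N + 1),
          Polynomial.aeval (PowerSeries.X ^ 2 : PowerSeries ℚ) (gaussPoly N l)
            * Polynomial.aeval (PowerSeries.X ^ 2 : PowerSeries ℚ) (gaussPoly (l + 1) i)
            * Polynomial.aeval (PowerSeries.X ^ 2 : PowerSeries ℚ) (gaussPoly (N - l) j)
            * PowerSeries.X ^ (N - l - j))
        = (∑ l ∈ Finset.range (N + 1),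
            Aux.Gp N l * Aux.Gp (l + 1) i * Aux.Gp (N - l) j
              * (PowerSeries.X : PowerSeries ℚ) ^ (N - l - j)) := rfl
      _ = (∑ l ∈ Finset.range (N + 1),
            Aux.Gp N l * Aux.Gp (l + 1) i * Aux.Gp (N - l) j
              * (PowerSeries.X : PowerSeries ℚ) ^ (N - l - j))
          * ((1 - (PowerSeries.X : PowerSeries ℚ) ^ (2 * (N + 1)))
            * (1 - (PowerSeries.X : PowerSeries ℚ) ^ (2 * (N + 1)))⁻¹) := by
          rw [hBB, mul_one]
      _ = ((∑ l ∈ Finset.range (N + 1),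
            Aux.Gp N l * Aux.Gp (l + 1) i * Aux.Gp (N - l) j
              * (PowerSeries.X : PowerSeries ℚ) ^ (N - l - j))
          * (1 - (PowerSeries.X : PowerSeries ℚ) ^ (2 * (N + 1))))
          * (1 - (PowerSeries.X : PowerSeries ℚ) ^ (2 * (N + 1)))⁻¹ := by ring
      _ = ((∏ n ∈ Finset.range (N + 1 - i - j), (1 + (PowerSeries.X : PowerSeries ℚ) ^ (n + 1)))
          * (Aux.Gp (N + 1) i * Aux.Gp (N + 1 - i) j)
          * (1 - (PowerSeries.X : PowerSeries ℚ) ^ (N + i + 1 - j)))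
          * (1 - (PowerSeries.X : PowerSeries ℚ) ^ (2 * (N + 1)))⁻¹ := by rw [key]
end

section
/- For nonnegative integer N and variables y, z: Σ_{k=0}^{N} [N choose k]_q (y;q)_k z^k = Σ_{k=0}^{N} [N choose k]_q (yz;q)_{N−k} z^k. -/
open Polynomial Finset

lemma gauss_zero (m : ℕ) : gaussPoly m 0 = 1 := by cases m <;> rfl

lemma gauss_succ (m r : ℕ) :
    gaussPoly (m+1) (r+1) = gaussPoly m r + X ^ (r+1) * gaussPoly m (r+1) := rfl

lemma gauss_lt : ∀ m r : ℕ, m < r → gaussPoly m r = 0 := by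
  intro m
  induction m with
  | zero => intro r hr; match r, hr with | r+1, _ => rfl
  | succ m ih =>
    intro r hr
    match r, hr with
    | r+1, hr =>
      rw [gauss_succ, ih r (by omega), ih (r+1) (by omega)]
      ring

lemma gauss_self : ∀ m : ℕ, gaussPoly m m = 1 := by
  intro m
  induction m with
  | zero => rfl
  | succ m ih => rw [gauss_succ, ih, gauss_lt m (m+1) (by omega)]; ring

lemma pascal2 : ∀ m r : ℕ,
    gaussPoly m (r+1) * (X^(r+1) - 1) = gaussPoly m r * (X^(m-r) - 1) := by
  intro m
  induction m with
  | zero =>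
    intro r
    rcases r with _ | s
    · simp [gauss_zero, gauss_lt 0 1 (by omega)]
    · rw [gauss_lt 0 (s+2) (by omega), gauss_lt 0 (s+1) (by omega)]
      simp
  | succ m ih =>
    intro r
    rcases r with _ | s
    · have h0 := ih 0
      rw [gauss_succ, gauss_zero, gauss_zero] at *
      simp only [Nat.sub_zero] at *
      linear_combination X * h0
    · rcases le_or_gt (s+1) m with hle | hlt
      · obtain ⟨a, rfl⟩ : ∃ a, m = s + 1 + a := ⟨m - (s+1), by omega⟩
        have h1 := ih (s+1)
        have h2 := ih s
        rw [show s + 1 + a - (s+1) = a from by omega] at h1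
        rw [show s + 1 + a - s = a + 1 from by omega] at h2
        rw [show s + 1 + a + 1 - (s+1) = a + 1 from by omega]
        rw [gauss_succ, gauss_succ]
        linear_combination X^(s+2) * h1 + h2
      · rw [gauss_succ, gauss_succ, gauss_lt m (s+1) (by omega),
          gauss_lt m (s+2) (by omega), show m + 1 - (s+1) = 0 from by omega]
        cases' Nat.lt_or_ge m s with h h
        · rw [gauss_lt m s (by omega)]; ring
        · have : m = s := by omega
          subst this
          simp [gauss_self]

lemma pascal2' (m r : ℕ) :
    gaussPoly (m+1) (r+1) = gaussPoly m (r+1) + X^(m-r) * gaussPoly m r := by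
  rw [gauss_succ]
  linear_combination pascal2 m r

noncomputable def qf (n : ℕ) : Polynomial ℚ := ∏ i ∈ Finset.range n, (X^(i+1) - 1)

lemma qf_zero : qf 0 = 1 := rfl

lemma qf_succ (n : ℕ) : qf (n+1) = qf n * (X^(n+1) - 1) := prod_range_succ _ _

lemma qf_ne_zero (n : ℕ) : qf n ≠ 0 := by
  refine Finset.prod_ne_zero_iff.2 fun i _ => ?_
  intro h
  have := congrArg (Polynomial.eval 0) h
  simp at this

lemma gauss_qf : ∀ m k : ℕ, k ≤ m → gaussPoly m k * (qf k * qf (m-k)) = qf m := by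
  intro m
  induction m with
  | zero =>
    intro k hk
    interval_cases k
    simp [gauss_zero, qf_zero]
  | succ m ih =>
    intro k hk
    rcases k with _ | s
    · simp [gauss_zero, qf_zero]
    · rcases eq_or_lt_of_le hk with heq | hlt
      · cases heq
        simp [gauss_self, qf_zero]
      · obtain ⟨a, rfl⟩ : ∃ a, m = s + 1 + a := ⟨m - (s+1), by omega⟩
        have h1 := ih s (by omega)
        have h2 := ih (s+1) (by omega)
        rw [show s + 1 + a - s = a + 1 from by omega] at h1
        rw [show s + 1 + a - (s+1) = a from by omega] at h2
        rw [show s + 1 + a + 1 - (s+1) = a + 1 from by omega]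
        rw [gauss_succ, qf_succ s, qf_succ a, qf_succ (s+1+a)]
        rw [qf_succ s] at h2
        rw [qf_succ a] at h1
        linear_combination (X^(s+1) - 1) * h1 + X^(s+1) * (X^(a+1) - 1) * h2

lemma tri1 (N k j : ℕ) (hjk : j ≤ k) (hkN : k ≤ N) :
    gaussPoly N k * gaussPoly k j = gaussPoly N j * gaussPoly (N-j) (k-j) := by
  obtain ⟨a, rfl⟩ : ∃ a, k = j + a := ⟨k - j, by omega⟩
  obtain ⟨b, rfl⟩ : ∃ b, N = j + a + b := ⟨N - (j+a), by omega⟩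
  have h1 := gauss_qf (j+a+b) (j+a) (by omega)
  have h2 := gauss_qf (j+a) j (by omega)
  have h3 := gauss_qf (j+a+b) j (by omega)
  have h4 := gauss_qf (a+b) a (by omega)
  rw [show j + a + b - (j+a) = b from by omega] at h1
  rw [show j + a - j = a from by omega] at h2
  rw [show j + a + b - j = a + b from by omega] at h3
  rw [show a + b - a = b from by omega] at h4
  rw [show j + a + b - j = a + b from by omega, show j + a - j = a from by omega]
  have hD : qf j * qf a * qf b * qf (j+a) * qf (a+b) ≠ 0 := by
    intro h
    rcases mul_eq_zero.1 h with h | h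
    · rcases mul_eq_zero.1 h with h | h
      · rcases mul_eq_zero.1 h with h | h
        · rcases mul_eq_zero.1 h with h | h
          · exact qf_ne_zero _ h
          · exact qf_ne_zero _ h
        · exact qf_ne_zero _ h
      · exact qf_ne_zero _ h
    · exact qf_ne_zero _ h
  apply mul_right_cancel₀ hD
  calc gaussPoly (j+a+b) (j+a) * gaussPoly (j+a) j * (qf j * qf a * qf b * qf (j+a) * qf (a+b))
      = (gaussPoly (j+a+b) (j+a) * (qf (j+a) * qf b)) *
        (gaussPoly (j+a) j * (qf j * qf a)) * qf (a+b) := by ring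
    _ = qf (j+a+b) * qf (j+a) * qf (a+b) := by rw [h1, h2]
    _ = (gaussPoly (j+a+b) j * (qf j * qf (a+b))) *
        (gaussPoly (a+b) a * (qf a * qf b)) * qf (j+a) := by rw [h3, h4]; ring
    _ = gaussPoly (j+a+b) j * gaussPoly (a+b) a * (qf j * qf a * qf b * qf (j+a) * qf (a+b)) := by
        ring

lemma tri2 (N k j : ℕ) (hk : k ≤ N) (hj : j ≤ N - k) :
    gaussPoly N k * gaussPoly (N-k) j = gaussPoly N j * gaussPoly (N-j) k := by
  obtain ⟨b, rfl⟩ : ∃ b, N = k + j + b := ⟨N - k - j, by omega⟩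
  have h1 := gauss_qf (k+j+b) k (by omega)
  have h2 := gauss_qf (j+b) j (by omega)
  have h3 := gauss_qf (k+j+b) j (by omega)
  have h4 := gauss_qf (k+b) k (by omega)
  rw [show k + j + b - k = j + b from by omega] at h1
  rw [show j + b - j = b from by omega] at h2
  rw [show k + j + b - j = k + b from by omega] at h3
  rw [show k + b - k = b from by omega] at h4
  rw [show k + j + b - k = j + b from by omega, show k + j + b - j = k + b from by omega]
  have hD : qf j * qf k * qf b * qf (j+b) * qf (k+b) ≠ 0 := by
    intro h
    rcases mul_eq_zero.1 h with h | h
    · rcases mul_eq_zero.1 h with h | h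
      · rcases mul_eq_zero.1 h with h | h
        · rcases mul_eq_zero.1 h with h | h
          · exact qf_ne_zero _ h
          · exact qf_ne_zero _ h
        · exact qf_ne_zero _ h
      · exact qf_ne_zero _ h
    · exact qf_ne_zero _ h
  apply mul_right_cancel₀ hD
  calc gaussPoly (k+j+b) k * gaussPoly (j+b) j * (qf j * qf k * qf b * qf (j+b) * qf (k+b))
      = (gaussPoly (k+j+b) k * (qf k * qf (j+b))) *
        (gaussPoly (j+b) j * (qf j * qf b)) * qf (k+b) := by ring
    _ = qf (k+j+b) * qf (j+b) * qf (k+b) := by rw [h1, h2]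
    _ = (gaussPoly (k+j+b) j * (qf j * qf (k+b))) *
        (gaussPoly (k+b) k * (qf k * qf b)) * qf (j+b) := by rw [h3, h4]; ring
    _ = gaussPoly (k+j+b) j * gaussPoly (k+b) k * (qf j * qf k * qf b * qf (j+b) * qf (k+b)) := by
        ring

section Ring

variable {R : Type*} [CommRing R] [Algebra ℚ R]

lemma rothe (q y : R) : ∀ k : ℕ, ∏ n ∈ range k, (1 - y * q^n)
    = ∑ j ∈ range (k+1),
        aeval q (gaussPoly k j) * ((-1 : R)^j * q^(j.choose 2) * y^j) := by
  intro k
  induction k with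
  | zero => simp [gauss_zero]
  | succ k ih =>
    rw [prod_range_succ, ih]
    have hextend : ∑ j ∈ range (k+1),
        aeval q (gaussPoly k j) * ((-1 : R)^j * q^(j.choose 2) * y^j)
        = 1 + ∑ j ∈ range (k+1),
            aeval q (gaussPoly k (j+1)) * ((-1 : R)^(j+1) * q^((j+1).choose 2) * y^(j+1)) := by
      rw [sum_range_succ' _ k, gauss_zero]
      rw [sum_range_succ _ k, gauss_lt k (k+1) (by omega)]
      simp [add_comm]
    rw [sum_range_succ' _ (k+1), gauss_zero]
    have key : ∀ j ∈ range (k+1),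
        aeval q (gaussPoly (k+1) (j+1)) * ((-1 : R)^(j+1) * q^((j+1).choose 2) * y^(j+1))
        = aeval q (gaussPoly k (j+1)) * ((-1 : R)^(j+1) * q^((j+1).choose 2) * y^(j+1))
          - aeval q (gaussPoly k j) * ((-1 : R)^j * q^(j.choose 2) * y^j) * (y * q^k) := by
      intro j hj
      have hj' : j ≤ k := by simpa using Nat.lt_succ_iff.1 (mem_range.1 hj)
      obtain ⟨d, rfl⟩ : ∃ d, k = j + d := ⟨k - j, by omega⟩
      have hp := congrArg (aeval q : Polynomial ℚ →ₐ[ℚ] R) (pascal2' (j+d) j)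
      rw [show j + d - j = d from by omega] at hp
      simp only [map_add, map_mul, map_pow, aeval_X] at hp
      rw [hp]
      rw [Nat.choose_succ_succ, Nat.choose_one_right]
      ring_nf
    rw [sum_congr rfl key, sum_sub_distrib, ← Finset.sum_mul, mul_sub, mul_one]
    nth_rewrite 1 [hextend]
    simp only [map_one, pow_zero, mul_one, one_mul, Nat.choose_zero_succ, Nat.choose_zero_right]
    ring

end Ring

lemma swapA {M : Type*} [AddCommMonoid M] (N : ℕ) (f : ℕ → ℕ → M) :
    ∑ k ∈ Finset.range (N+1), ∑ j ∈ Finset.range (k+1), f k j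
      = ∑ j ∈ Finset.range (N+1), ∑ m ∈ Finset.range (N+1-j), f (j+m) j := by
  rw [Finset.sum_sigma', Finset.sum_sigma']
  refine Finset.sum_nbij' (fun x => ⟨x.2, x.1 - x.2⟩) (fun x => ⟨x.1 + x.2, x.1⟩)
    (fun x hx => ?_) (fun x hx => ?_) (fun x hx => ?_) (fun x hx => ?_) (fun x hx => ?_)
  · simp only [Finset.mem_sigma, Finset.mem_range] at *
    omega
  · simp only [Finset.mem_sigma, Finset.mem_range] at *
    omega
  · obtain ⟨k, j⟩ := x
    simp only [Finset.mem_sigma, Finset.mem_range] at hx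
    have h : j + (k - j) = k := by omega
    simp [h]
  · obtain ⟨j, m⟩ := x
    simp only [Finset.mem_sigma, Finset.mem_range] at hx
    have h : j + m - j = m := by omega
    simp [h]
  · obtain ⟨k, j⟩ := x
    simp only [Finset.mem_sigma, Finset.mem_range] at hx
    have h : j + (k - j) = k := by omega
    simp only []
    rw [h]

lemma swapB {M : Type*} [AddCommMonoid M] (N : ℕ) (f : ℕ → ℕ → M) :
    ∑ k ∈ Finset.range (N+1), ∑ j ∈ Finset.range (N+1-k), f k j
      = ∑ j ∈ Finset.range (N+1), ∑ k ∈ Finset.range (N+1-j), f k j := by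
  rw [Finset.sum_sigma', Finset.sum_sigma']
  refine Finset.sum_nbij' (fun x => ⟨x.2, x.1⟩) (fun x => ⟨x.2, x.1⟩)
    (fun x hx => ?_) (fun x hx => ?_) (fun x hx => ?_) (fun x hx => ?_) (fun x hx => rfl)
  · simp only [Finset.mem_sigma, Finset.mem_range] at *
    omega
  · simp only [Finset.mem_sigma, Finset.mem_range] at *
    omega
  · rfl
  · rfl

theorem stmt13 (N : ℕ) :
    let q : MvPolynomial (Fin 3) ℚ := MvPolynomial.X 0
    let y : MvPolynomial (Fin 3) ℚ := MvPolynomial.X 1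
    let z : MvPolynomial (Fin 3) ℚ := MvPolynomial.X 2
    ∑ k ∈ Finset.range (N + 1),
      Polynomial.aeval q (gaussPoly N k) * (∏ n ∈ Finset.range k, (1 - y * q ^ n)) * z ^ k =
    ∑ k ∈ Finset.range (N + 1),
      Polynomial.aeval q (gaussPoly N k) *
        (∏ n ∈ Finset.range (N - k), (1 - y * z * q ^ n)) * z ^ k := by
  intro q y z
  have hL : ∑ k ∈ Finset.range (N + 1),
      Polynomial.aeval q (gaussPoly N k) * (∏ n ∈ Finset.range k, (1 - y * q ^ n)) * z ^ k
      = ∑ j ∈ range (N+1), ∑ m ∈ range (N+1-j),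
          aeval q (gaussPoly N j) * ((-1 : MvPolynomial (Fin 3) ℚ)^j * q^(j.choose 2) * y^j)
            * aeval q (gaussPoly (N-j) m) * (z^j * z^m) := by
    calc ∑ k ∈ range (N+1), aeval q (gaussPoly N k) * (∏ n ∈ range k, (1 - y*q^n)) * z^k
        = ∑ k ∈ range (N+1), ∑ j ∈ range (k+1),
            aeval q (gaussPoly N j) * ((-1 : MvPolynomial (Fin 3) ℚ)^j * q^(j.choose 2) * y^j)
              * aeval q (gaussPoly (N-j) (k-j)) * z^k := by
          refine sum_congr rfl fun k hk => ?_
          have hk' : k ≤ N := by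
            have := mem_range.1 hk; omega
          rw [rothe q y k, Finset.mul_sum, Finset.sum_mul]
          refine sum_congr rfl fun j hj => ?_
          have hj' : j ≤ k := by
            have := mem_range.1 hj; omega
          have h := congrArg (aeval q : Polynomial ℚ →ₐ[ℚ] MvPolynomial (Fin 3) ℚ) (tri1 N k j hj' hk')
          simp only [map_mul] at h
          linear_combination ((-1 : MvPolynomial (Fin 3) ℚ)^j * q^(j.choose 2) * y^j * z^k) * h
      _ = ∑ j ∈ range (N+1), ∑ m ∈ range (N+1-j),
            aeval q (gaussPoly N j) * ((-1 : MvPolynomial (Fin 3) ℚ)^j * q^(j.choose 2) * y^j)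
              * aeval q (gaussPoly (N-j) (j+m-j)) * z^(j+m) :=
          swapA N (fun k j => aeval q (gaussPoly N j) * ((-1 : MvPolynomial (Fin 3) ℚ)^j * q^(j.choose 2) * y^j)
              * aeval q (gaussPoly (N-j) (k-j)) * z^k)
      _ = _ := by
          refine sum_congr rfl fun j hj => sum_congr rfl fun m hm => ?_
          rw [show j + m - j = m from by omega, pow_add]
  have hR : ∑ k ∈ Finset.range (N + 1),
      Polynomial.aeval q (gaussPoly N k) * (∏ n ∈ Finset.range (N-k), (1 - y * z * q ^ n)) * z ^ k
      = ∑ j ∈ range (N+1), ∑ m ∈ range (N+1-j),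
          aeval q (gaussPoly N j) * ((-1 : MvPolynomial (Fin 3) ℚ)^j * q^(j.choose 2) * y^j)
            * aeval q (gaussPoly (N-j) m) * (z^j * z^m) := by
    calc ∑ k ∈ range (N+1), aeval q (gaussPoly N k) * (∏ n ∈ range (N-k), (1 - y*z*q^n)) * z^k
        = ∑ k ∈ range (N+1), ∑ j ∈ range (N+1-k),
            aeval q (gaussPoly N j) * ((-1 : MvPolynomial (Fin 3) ℚ)^j * q^(j.choose 2) * y^j)
              * aeval q (gaussPoly (N-j) k) * (z^j * z^k) := by
          refine sum_congr rfl fun k hk => ?_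
          have hk' : k ≤ N := by
            have := mem_range.1 hk; omega
          rw [rothe q (y*z) (N-k), Finset.mul_sum, Finset.sum_mul,
            show N - k + 1 = N + 1 - k from by omega]
          refine sum_congr rfl fun j hj => ?_
          have hj' : j ≤ N - k := by
            have := mem_range.1 hj; omega
          have h := congrArg (aeval q : Polynomial ℚ →ₐ[ℚ] MvPolynomial (Fin 3) ℚ) (tri2 N k j hk' hj')
          simp only [map_mul] at h
          linear_combination ((-1 : MvPolynomial (Fin 3) ℚ)^j * q^(j.choose 2) * y^j * z^j * z^k) * h
      _ = _ :=
          swapB N (fun k j => aeval q (gaussPoly N j) * ((-1 : MvPolynomial (Fin 3) ℚ)^j * q^(j.choose 2) * y^j)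
              * aeval q (gaussPoly (N-j) k) * (z^j * z^k))
  rw [hL, hR]
end

section
/- Let N, n, k be non-negative integers. The number of partitions of n into at most N parts with exactly k odd parts equals the number of partitions of n into parts ≤ N whose alternating sum of parts equals k. -/
namespace ConjAux

/-- number of parts of `π` greater than `j` (the `j`-th column length). -/
def cc (π : List ℕ) (j : ℕ) : ℕ := (π.filter (fun p => j < p)).length

/-- conjugate partition -/
def conj (π : List ℕ) : List ℕ := (List.range π.headI).map (cc π)

/-- remove the first column -/
def dec (π : List ℕ) : List ℕ := (π.map (· - 1)).filter (fun p => p ≠ 0)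

/-- number of odd parts -/
def oc (π : List ℕ) : ℕ := (π.filter (fun p => p % 2 == 1)).length

lemma conj_nil : conj [] = [] := rfl

lemma cc_eq_countP (π : List ℕ) (j : ℕ) : cc π j = π.countP (fun p => j < p) :=
  List.countP_eq_length_filter.symm

lemma oc_eq_countP (π : List ℕ) : oc π = π.countP (fun p => p % 2 == 1) :=
  List.countP_eq_length_filter.symm

lemma cc_le_length (π : List ℕ) (j : ℕ) : cc π j ≤ π.length :=
  List.length_filter_le _ _

lemma mem_le_headI {π : List ℕ} (hπ : IsPartition π) : ∀ p ∈ π, p ≤ π.headI := by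
  obtain ⟨hc, _⟩ := hπ
  cases π with
  | nil => intro p hp; simp at hp
  | cons a t =>
    intro p hp
    rcases List.mem_cons.mp hp with rfl | hp
    · simp
    · exact List.rel_of_pairwise_cons (List.isChain_iff_pairwise.mp hc) hp

lemma headI_pos {π : List ℕ} (hπ : IsPartition π) (hne : π ≠ []) : 0 < π.headI := by
  cases π with
  | nil => exact absurd rfl hne
  | cons a t => exact hπ.2 a List.mem_cons_self

lemma cc_pos_iff {π : List ℕ} (hπ : IsPartition π) (j : ℕ) :
    0 < cc π j ↔ j < π.headI := by
  constructor
  · intro h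
    rw [cc, List.length_pos_iff] at h
    obtain ⟨p, hp⟩ := List.exists_mem_of_ne_nil _ h
    have := List.mem_filter.mp hp
    have h2 : j < p := by simpa using this.2
    exact lt_of_lt_of_le h2 (mem_le_headI hπ p this.1)
  · intro h
    cases π with
    | nil => simp at h
    | cons a t =>
      rw [cc, List.length_pos_iff]
      intro hnil
      have : a ∈ List.filter (fun p => decide (j < p)) (a :: t) := by
        apply List.mem_filter.mpr
        exact ⟨List.mem_cons_self, by simpa using h⟩
      rw [hnil] at this
      simp at this

lemma isPartition_tail {π : List ℕ} (hπ : IsPartition π) : IsPartition π.tail :=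
  ⟨hπ.1.tail, fun p hp => hπ.2 p (List.mem_of_mem_tail hp)⟩

lemma isPartition_dec {π : List ℕ} (hπ : IsPartition π) : IsPartition (dec π) := by
  constructor
  · show List.IsChain _ _; rw [List.isChain_iff_pairwise]
    apply List.Pairwise.sublist List.filter_sublist
    apply List.Pairwise.map _ _ (List.isChain_iff_pairwise.mp hπ.1)
    intro a b h
    omega
  · intro p hp
    have := (List.mem_filter.mp hp).2
    simpa [Nat.pos_iff_ne_zero] using this

lemma headI_dec {π : List ℕ} (hπ : IsPartition π) : (dec π).headI = π.headI - 1 := by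
  cases π with
  | nil => rfl
  | cons a t =>
    have ha : 0 < a := hπ.2 a List.mem_cons_self
    by_cases h2 : 2 ≤ a
    · have : dec (a :: t) = (a - 1) :: (t.map (· - 1)).filter (fun p => p ≠ 0) := by
        rw [dec, List.map_cons, List.filter_cons_of_pos]
        simp; omega
      rw [this]; rfl
    · -- a = 1, so every part is 1 and dec is empty
      have ha1 : a = 1 := by omega
      have : dec (a :: t) = [] := by
        rw [dec, List.filter_eq_nil_iff]
        intro x hx
        simp only [List.mem_map] at hx
        obtain ⟨p, hp, rfl⟩ := hx
        have h1 : p ≤ a := mem_le_headI hπ p hp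
        simp; omega
      rw [this, ha1]; rfl

lemma cc_succ (π : List ℕ) (j : ℕ) : cc π (j + 1) = cc (dec π) j := by
  rw [cc_eq_countP, cc_eq_countP, dec, List.countP_filter, List.countP_map]
  apply List.countP_congr
  intro p _
  simp only [Function.comp]
  constructor
  · intro h
    have : j + 1 < p := by simpa using h
    simp; omega
  · intro h
    simp only [Bool.and_eq_true, decide_eq_true_eq, ne_eq, Bool.not_eq_true',
      decide_eq_false_iff_not] at h ⊢
    omega

lemma cc_zero {π : List ℕ} (hπ : IsPartition π) : cc π 0 = π.length := by
  rw [cc]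
  congr 1
  apply List.filter_eq_self.mpr
  intro p hp
  simpa using hπ.2 p hp

lemma conj_cons {π : List ℕ} (hπ : IsPartition π) (hne : π ≠ []) :
    conj π = π.length :: conj (dec π) := by
  have h1 : 0 < π.headI := headI_pos hπ hne
  rw [conj, show π.headI = (π.headI - 1) + 1 by omega, List.range_succ_eq_map,
    List.map_cons, List.map_map, cc_zero hπ]
  congr 1
  rw [conj, headI_dec hπ]
  apply List.map_congr_left
  intro j _
  simp only [Function.comp, Nat.succ_eq_add_one]
  exact cc_succ π j

lemma sum_filter_ne_zero (l : List ℕ) : (l.filter (fun p => p ≠ 0)).sum = l.sum := by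
  induction l with
  | nil => rfl
  | cons a t ih =>
    rw [List.filter_cons]
    by_cases h : a = 0
    · rw [if_neg (by simp [h]), ih, h, List.sum_cons]; simp
    · rw [if_pos (by simp [h]), List.sum_cons, List.sum_cons, ih]

lemma sum_map_pred : ∀ (π : List ℕ), (∀ p ∈ π, 0 < p) →
    (π.map (· - 1)).sum + π.length = π.sum := by
  intro π
  induction π with
  | nil => intro _; rfl
  | cons a t ih =>
    intro h
    have ha := h a List.mem_cons_self
    have h2 := ih (fun p hp => h p (List.mem_cons_of_mem a hp))
    simp only [List.map_cons, List.sum_cons, List.length_cons]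
    omega

lemma sum_dec {π : List ℕ} (hπ : IsPartition π) : (dec π).sum + π.length = π.sum := by
  rw [dec, sum_filter_ne_zero]
  exact sum_map_pred π hπ.2

lemma length_pos_of_ne_nil {π : List ℕ} (hne : π ≠ []) : 0 < π.length :=
  List.length_pos_iff.mpr hne

lemma one_le_sum {π : List ℕ} (hπ : IsPartition π) (hne : π ≠ []) : 0 < π.sum := by
  cases π with
  | nil => exact absurd rfl hne
  | cons a t =>
    have := hπ.2 a List.mem_cons_self
    simp only [List.sum_cons]
    omega

lemma sum_dec_lt {π : List ℕ} (hπ : IsPartition π) (hne : π ≠ []) :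
    (dec π).sum < π.sum := by
  have h1 := sum_dec hπ
  have h2 := length_pos_of_ne_nil hne
  omega

lemma sum_conj_aux : ∀ n π, IsPartition π → π.sum ≤ n → (conj π).sum = π.sum := by
  intro n
  induction n with
  | zero =>
    intro π hπ hs
    have : π = [] := by
      cases π with
      | nil => rfl
      | cons a t =>
        have := hπ.2 a List.mem_cons_self
        simp only [List.sum_cons] at hs; omega
    subst this; rfl
  | succ n ih =>
    intro π hπ hs
    by_cases hne : π = []
    · subst hne; rfl
    · rw [conj_cons hπ hne, List.sum_cons]
      have h1 := sum_dec hπ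
      have h2 := length_pos_of_ne_nil hne
      rw [ih (dec π) (isPartition_dec hπ) (by omega)]
      omega

lemma sum_conj {π : List ℕ} (hπ : IsPartition π) : (conj π).sum = π.sum :=
  sum_conj_aux π.sum π hπ le_rfl

lemma oc_dec {π : List ℕ} (hπ : IsPartition π) : oc (dec π) + oc π = π.length := by
  rw [oc_eq_countP π, add_comm, List.length_eq_countP_add_countP (fun p => p % 2 == 1) (l := π)]
  congr 1
  rw [oc_eq_countP, dec, List.countP_filter, List.countP_map]
  apply List.countP_congr
  intro p hp
  have hp1 : 0 < p := hπ.2 p hp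
  simp only [Function.comp, Bool.and_eq_true, beq_iff_eq, ne_eq, Bool.not_eq_true',
    decide_eq_false_iff_not, decide_eq_true_eq]
  omega

lemma oc_le_length (π : List ℕ) : oc π ≤ π.length := List.length_filter_le _ _

lemma altSum_conj_aux : ∀ n π, IsPartition π → π.sum ≤ n → altSum (conj π) = (oc π : ℤ) := by
  intro n
  induction n with
  | zero =>
    intro π hπ hs
    have : π = [] := by
      cases π with
      | nil => rfl
      | cons a t =>
        have := hπ.2 a List.mem_cons_self
        simp only [List.sum_cons] at hs; omega
    subst this; rfl
  | succ n ih =>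
    intro π hπ hs
    by_cases hne : π = []
    · subst hne; rfl
    · rw [conj_cons hπ hne]
      have h1 := sum_dec hπ
      have h2 := length_pos_of_ne_nil hne
      have h3 : altSum (π.length :: conj (dec π)) = (π.length : ℤ) - altSum (conj (dec π)) := rfl
      rw [h3, ih (dec π) (isPartition_dec hπ) (by omega)]
      have h4 := oc_dec hπ
      have h5 := oc_le_length π
      -- cast handled by omega
      omega

lemma altSum_conj {π : List ℕ} (hπ : IsPartition π) : altSum (conj π) = (oc π : ℤ) :=
  altSum_conj_aux π.sum π hπ le_rfl

lemma mem_conj_le_length {π : List ℕ} {p : ℕ} (hp : p ∈ conj π) : p ≤ π.length := by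
  rw [conj] at hp
  obtain ⟨j, _, rfl⟩ := List.mem_map.mp hp
  exact cc_le_length π j

lemma length_dec_le (π : List ℕ) : (dec π).length ≤ π.length :=
  le_trans (List.length_filter_le _ _) (by rw [List.length_map])

lemma isPartition_conj_aux : ∀ n π, IsPartition π → π.sum ≤ n → IsPartition (conj π) := by
  intro n
  induction n with
  | zero =>
    intro π hπ hs
    have : π = [] := by
      cases π with
      | nil => rfl
      | cons a t =>
        have := hπ.2 a List.mem_cons_self
        simp only [List.sum_cons] at hs; omega
    subst this
    exact ⟨List.isChain_nil, by intro p hp; rw [conj_nil] at hp; simp at hp⟩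
  | succ n ih =>
    intro π hπ hs
    by_cases hne : π = []
    · subst hne
      exact ⟨List.isChain_nil, by intro p hp; rw [conj_nil] at hp; simp at hp⟩
    · rw [conj_cons hπ hne]
      have h1 := sum_dec hπ
      have h2 := length_pos_of_ne_nil hne
      have hdec := ih (dec π) (isPartition_dec hπ) (by omega)
      constructor
      · show List.IsChain _ _; rw [List.isChain_cons]
        refine ⟨?_, hdec.1⟩
        intro y hy
        have : y ∈ conj (dec π) := List.mem_of_mem_head? hy
        calc y ≤ (dec π).length := mem_conj_le_length this
          _ ≤ π.length := length_dec_le π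
      · intro p hp
        rcases List.mem_cons.mp hp with rfl | hp
        · exact h2
        · exact hdec.2 p hp

lemma isPartition_conj {π : List ℕ} (hπ : IsPartition π) : IsPartition (conj π) :=
  isPartition_conj_aux π.sum π hπ le_rfl

lemma range_filter_lt : ∀ (a b : ℕ), b ≤ a →
    (List.range a).filter (fun j => j < b) = List.range b := by
  intro a
  induction a with
  | zero => intro b hb; interval_cases b; rfl
  | succ a ih =>
    intro b hb
    rw [List.range_succ, List.filter_append]
    by_cases h : b = a + 1
    · subst h
      rw [List.filter_cons_of_pos, List.filter_eq_self.mpr]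
      · simp [List.range_succ]
      · intro x hx
        simp only [List.mem_range] at hx
        simp only [decide_eq_true_eq]
        omega
      · simp only [decide_eq_true_eq]; omega
    · have hb' : b ≤ a := by omega
      rw [ih b hb', List.filter_cons_of_neg (by simp only [decide_eq_true_eq]; omega)]
      simp

lemma cc_cons_of_lt {a : ℕ} {t : List ℕ} {j : ℕ} (h : j < a) :
    cc (a :: t) j = cc t j + 1 := by
  rw [cc, cc, List.filter_cons_of_pos (by simpa using h)]
  simp

lemma dec_conj {π : List ℕ} (hπ : IsPartition π) (hne : π ≠ []) :
    dec (conj π) = conj π.tail := by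
  obtain ⟨a, t, rfl⟩ : ∃ a t, π = a :: t := by
    cases π with
    | nil => exact absurd rfl hne
    | cons a t => exact ⟨a, t, rfl⟩
  have ht : IsPartition t := isPartition_tail hπ
  have hta : t.headI ≤ a := by
    cases t with
    | nil => simp
    | cons b s =>
      exact List.rel_of_pairwise_cons (List.isChain_iff_pairwise.mp hπ.1) List.mem_cons_self
  rw [dec, show conj (a :: t) = (List.range a).map (cc (a :: t)) from rfl,
    List.map_map, List.filter_map]
  have hfc : (List.range a).filter ((fun p => p ≠ 0) ∘ ((· - 1) ∘ cc (a :: t)))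
      = List.range t.headI := by
    rw [← range_filter_lt a t.headI hta]
    apply List.filter_congr
    intro j hj
    have hja : j < a := List.mem_range.mp hj
    have hcc : cc (a :: t) j = cc t j + 1 := cc_cons_of_lt hja
    simp only [Function.comp, hcc, Nat.add_sub_cancel, ne_eq, decide_eq_decide,
      Bool.not_eq_true', decide_eq_false_iff_not]
    rw [← cc_pos_iff ht j]
    omega
  rw [hfc, show (a :: t).tail = t from rfl,
    show conj t = (List.range t.headI).map (cc t) from rfl]
  apply List.map_congr_left
  intro j hj
  have hjt : j < t.headI := List.mem_range.mp hj
  have hja : j < a := lt_of_lt_of_le hjt hta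
  simp only [Function.comp, cc_cons_of_lt hja, Nat.add_sub_cancel]

lemma length_conj (π : List ℕ) : (conj π).length = π.headI := by
  rw [conj, List.length_map, List.length_range]

lemma conj_ne_nil {π : List ℕ} (hπ : IsPartition π) (hne : π ≠ []) : conj π ≠ [] := by
  rw [conj_cons hπ hne]; simp

lemma conj_conj {π : List ℕ} (hπ : IsPartition π) : conj (conj π) = π := by
  induction π with
  | nil => rfl
  | cons a t ih =>
    have ht : IsPartition t := isPartition_tail hπ
    have hne : (a :: t) ≠ [] := by simp
    rw [conj_cons (isPartition_conj hπ) (conj_ne_nil hπ hne), length_conj,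
      dec_conj hπ hne]
    have : (a :: t).headI = a := rfl
    rw [this]
    have : (a :: t).tail = t := rfl
    rw [this, ih ht]

end ConjAux

open ConjAux in
theorem stmt15 (N n k : ℕ) :
    Nat.card {π : List ℕ // IsPartition π ∧ π.length ≤ N ∧ π.sum = n ∧
      (π.filter fun p => p % 2 == 1).length = k} =
    Nat.card {π : List ℕ // IsPartition π ∧ (∀ p ∈ π, p ≤ N) ∧ π.sum = n ∧
      altSum π = (k : ℤ)} := by
  apply Nat.card_congr
  refine ⟨fun x => ⟨conj x.1, ?_⟩, fun x => ⟨conj x.1, ?_⟩, ?_, ?_⟩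
  · obtain ⟨π, h1, h2, h3, h4⟩ := x
    refine ⟨isPartition_conj h1, ?_, by rw [sum_conj h1, h3], ?_⟩
    · intro p hp
      exact le_trans (mem_conj_le_length hp) h2
    · rw [altSum_conj h1]
      exact congrArg Nat.cast h4
  · obtain ⟨π, h1, h2, h3, h4⟩ := x
    refine ⟨isPartition_conj h1, ?_, by rw [sum_conj h1, h3], ?_⟩
    · rw [length_conj]
      cases π with
      | nil => simp
      | cons a t => exact h2 a List.mem_cons_self
    · have := altSum_conj (isPartition_conj h1)
      rw [conj_conj h1, h4] at this
      have h5 : (oc (conj π) : ℤ) = (k : ℤ) := this.symm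
      exact Nat.cast_injective h5
  · intro x
    apply Subtype.ext
    exact conj_conj x.2.1
  · intro x
    apply Subtype.ext
    exact conj_conj x.2.1
end
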